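/- arXiv:1712.01301 — 6 statements merged into one kernel-verified Lean document; each statement's English description precedes it below -/
import Mathlib

section
/- For all reals x, y with 0 ≤ x ≤ 3 − 2√2 and 0 < y ≤ 3 − 2√2, setting D(t) := (1 + t − √(t² − 6t + 1))/4, one has 1 − 2·D(y) ≠ 0 and the identity (1/2)·( D(x) + D(y)·(x/y) + (2·D(y)²·(x/y) + D(y)) / (1 − 2·D(y)) ) = (1/8)·(1 + x − √(x² − 6x + 1)) + (1/(8y²))·(x + y)·(1 − 3y − √(y² − 6y + 1)). -/
lemma quad_nonneg {t : ℝ} (ht0 : 0 ≤ t) (ht1 : t ≤ 3 - 2 * Real.sqrt 2) :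
    0 ≤ t ^ 2 - 6 * t + 1 := by
  have h2 : Real.sqrt 2 ^ 2 = 2 := Real.sq_sqrt (by norm_num)
  have h2' : (1:ℝ) ≤ Real.sqrt 2 := by nlinarith [Real.sqrt_nonneg 2]
  nlinarith [Real.sqrt_nonneg 2]

/-- For all reals `x, y` with `0 ≤ x ≤ 3 − 2√2` and `0 < y ≤ 3 − 2√2`, setting
`D(t) = (1 + t − √(t² − 6t + 1))/4`, one has `1 − 2·D(y) ≠ 0` and the identity
`(1/2)·(D(x) + D(y)·(x/y) + (2·D(y)²·(x/y) + D(y))/(1 − 2·D(y)))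
  = (1/8)·(1 + x − √(x² − 6x + 1)) + (1/(8y²))·(x + y)·(1 − 3y − √(y² − 6y + 1))`. -/
theorem cycleIndex_outerplanar_blocks (x y : ℝ)
    (hx0 : 0 ≤ x) (hx1 : x ≤ 3 - 2 * Real.sqrt 2)
    (hy0 : 0 < y) (hy1 : y ≤ 3 - 2 * Real.sqrt 2)
    (D : ℝ → ℝ) (hD : ∀ t, D t = (1 + t - Real.sqrt (t ^ 2 - 6 * t + 1)) / 4) :
    1 - 2 * D y ≠ 0 ∧
    (1 / 2) * (D x + D y * (x / y) + (2 * (D y) ^ 2 * (x / y) + D y) / (1 - 2 * D y))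
      = (1 / 8) * (1 + x - Real.sqrt (x ^ 2 - 6 * x + 1))
        + (1 / (8 * y ^ 2)) * (x + y) * (1 - 3 * y - Real.sqrt (y ^ 2 - 6 * y + 1)) := by
  have h2 : Real.sqrt 2 ^ 2 = 2 := Real.sq_sqrt (by norm_num)
  have h2' : (1:ℝ) ≤ Real.sqrt 2 := by nlinarith [Real.sqrt_nonneg 2]
  set a := Real.sqrt (x ^ 2 - 6 * x + 1) with ha0
  set b := Real.sqrt (y ^ 2 - 6 * y + 1) with hb0
  have ha : a ^ 2 = x ^ 2 - 6 * x + 1 := Real.sq_sqrt (quad_nonneg hx0 hx1)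
  have hb : b ^ 2 = y ^ 2 - 6 * y + 1 := Real.sq_sqrt (quad_nonneg hy0.le hy1)
  have hbn : 0 ≤ b := Real.sqrt_nonneg _
  have hy1' : y < 1 := by nlinarith
  have hkey : 0 < 1 - y + b := by linarith
  have hDy : D y = (1 + y - b) / 4 := by rw [hD]
  have hDx : D x = (1 + x - a) / 4 := by rw [hD]
  have hne : 1 - 2 * D y ≠ 0 := by rw [hDy]; intro h; nlinarith
  refine ⟨hne, ?_⟩
  rw [hDy, hDx]
  have hden : (1 : ℝ) - 2 * ((1 + y - b) / 4) ≠ 0 := by rw [hDy] at hne; exact hne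
  have hy0' : y ≠ 0 := hy0.ne'
  have hne' : 1 - y + b ≠ 0 := ne_of_gt hkey
  have hrw : (1:ℝ) - 2 * ((1 + y - b) / 4) = (1 - y + b) / 2 := by ring
  rw [hrw]
  have hy0' : y ≠ 0 := hy0.ne'
  field_simp
  linear_combination (32 * (x + y)) * hb
end

section
/- Let w be a real number, let M(w) be the 3×3 real matrix with rows (2w⁴−4w³+3w−1, −w³+w², w³−2w²+w), (−w³+w², 2w⁴−4w³+3w−1, w³−2w²+w), (−w²+w, −w²+w, 2w⁴−4w³+w²+2w−1), and let b(w) := (2w⁴−4w³−w²+3w−1, −w, −w²). If det M(w) ≠ 0 and v ∈ ℝ³ satisfies M(w)·v = b(w), then the first coordinate v₁ of v satisfies v₁·(4w³−6w²−2w+1)·(2w−1) = 8w⁴−16w³+4w−1; in particular, if moreover (4w³−6w²−2w+1)(2w−1) ≠ 0, then v₁ = (8w⁴−16w³+4w−1)/((4w³−6w²−2w+1)(2w−1)). -/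
/-- Closed-form solution for the first unknown of the linear system determining
the expected distance `E[η₀']` between the two marked vertices of a
Boltzmann-distributed marked dissection. -/
theorem marked_dissection_linear_system (w : ℝ)
    (M : Matrix (Fin 3) (Fin 3) ℝ)
    (hM : M = !![2*w^4 - 4*w^3 + 3*w - 1, -w^3 + w^2, w^3 - 2*w^2 + w;
                 -w^3 + w^2, 2*w^4 - 4*w^3 + 3*w - 1, w^3 - 2*w^2 + w;
                 -w^2 + w, -w^2 + w, 2*w^4 - 4*w^3 + w^2 + 2*w - 1])
    (b : Fin 3 → ℝ)
    (hb : b = ![2*w^4 - 4*w^3 - w^2 + 3*w - 1, -w, -w^2])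
    (hdet : M.det ≠ 0)
    (v : Fin 3 → ℝ) (hv : M.mulVec v = b) :
    v 0 * ((4*w^3 - 6*w^2 - 2*w + 1) * (2*w - 1)) = 8*w^4 - 16*w^3 + 4*w - 1 ∧
    ((4*w^3 - 6*w^2 - 2*w + 1) * (2*w - 1) ≠ 0 →
      v 0 = (8*w^4 - 16*w^3 + 4*w - 1) / ((4*w^3 - 6*w^2 - 2*w + 1) * (2*w - 1))) := by
  subst hM hb
  set R : ℝ := w^8 - 4*w^7 + 4*w^6 + 4*w^5 - 10*w^4 + 4*w^3 + 4*w^2 - 4*w + 1 with hR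
  have hdet' : Matrix.det !![2*w^4 - 4*w^3 + 3*w - 1, -w^3 + w^2, w^3 - 2*w^2 + w;
                 -w^3 + w^2, 2*w^4 - 4*w^3 + 3*w - 1, w^3 - 2*w^2 + w;
                 -w^2 + w, -w^2 + w, 2*w^4 - 4*w^3 + w^2 + 2*w - 1]
      = R * ((4*w^3 - 6*w^2 - 2*w + 1) * (2*w - 1)) := by
    rw [Matrix.det_fin_three]
    simp [Matrix.cons_val_zero, Matrix.cons_val_one, hR]
    ring
  have hRne : R ≠ 0 := by
    intro h
    apply hdet
    rw [hdet', h, zero_mul]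
  have e0 := congrFun hv 0
  have e1 := congrFun hv 1
  have e2 := congrFun hv 2
  simp [Matrix.mulVec, dotProduct, Fin.sum_univ_three] at e0 e1 e2
  have key : v 0 * ((4*w^3 - 6*w^2 - 2*w + 1) * (2*w - 1)) * R
      = (8*w^4 - 16*w^3 + 4*w - 1) * R := by
    linear_combination
      (4*w^8 - 16*w^7 + 18*w^6 + 7*w^5 - 27*w^4 + 14*w^3 + 4*w^2 - 5*w + 1) * e0
      + (2*w^7 - 6*w^6 + 4*w^5 + 4*w^4 - 6*w^3 + 2*w^2) * e1
      + (-2*w^7 + 7*w^6 - 7*w^5 - 2*w^4 + 8*w^3 - 5*w^2 + w) * e2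
  have main : v 0 * ((4*w^3 - 6*w^2 - 2*w + 1) * (2*w - 1)) = 8*w^4 - 16*w^3 + 4*w - 1 :=
    mul_right_cancel₀ hRne key
  refine ⟨main, fun hP => ?_⟩
  rw [eq_div_iff hP]
  linarith [main]
end

section
/- Let ρ > 0 and c > 0, and let (a_n)_{n≥0}, (b_n)_{n≥0} be sequences of nonnegative reals such that a_n·n^{3/2}·ρ^n → c as n → ∞ and such that Σ_{n≥0} b_n·r^n < ∞ for some r > ρ. Then the convolution s_n := Σ_{k=0}^{n} a_{n−k}·b_k satisfies s_n·n^{3/2}·ρ^n → c·Σ_{k≥0} b_k·ρ^k as n → ∞. -/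
open Filter

/-- Transfer of square-root-type asymptotics through a convolution with a
series of strictly larger radius of convergence: if `a_n·n^{3/2}·ρ^n → c` and
`Σ b_n·r^n < ∞` for some `r > ρ`, then the convolution
`s_n = Σ_{k=0}^{n} a_{n−k}·b_k` satisfies
`s_n·n^{3/2}·ρ^n → c·Σ_{k≥0} b_k·ρ^k`. -/
theorem convolution_asymptotics (ρ c : ℝ) (hρ : 0 < ρ) (hc : 0 < c)
    (a b : ℕ → ℝ) (ha0 : ∀ n, 0 ≤ a n) (hb0 : ∀ n, 0 ≤ b n)
    (ha : Tendsto (fun n : ℕ => a n * (n : ℝ) ^ ((3 : ℝ) / 2) * ρ ^ n)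
      atTop (nhds c))
    (hb : ∃ r : ℝ, ρ < r ∧ Summable (fun n : ℕ => b n * r ^ n)) :
    Tendsto (fun n : ℕ =>
        (∑ k ∈ Finset.range (n + 1), a (n - k) * b k)
          * (n : ℝ) ^ ((3 : ℝ) / 2) * ρ ^ n)
      atTop (nhds (c * ∑' k : ℕ, b k * ρ ^ k)) := by
  obtain ⟨r, hρr, hbr⟩ := hb
  have hr : 0 < r := hρ.trans hρr
  set A : ℕ → ℝ := fun n => a n * (n : ℝ) ^ ((3 : ℝ) / 2) * ρ ^ n with hA
  have hA0 : ∀ n, 0 ≤ A n := fun n =>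
    mul_nonneg (mul_nonneg (ha0 n) (Real.rpow_nonneg (Nat.cast_nonneg n) _))
      (pow_nonneg hρ.le n)
  -- bound on A
  obtain ⟨M0, hM0⟩ := ha.bddAbove_range
  set M : ℝ := max M0 0 with hMdef
  have hM : ∀ n, A n ≤ M := fun n =>
    le_max_of_le_left (hM0 ⟨n, rfl⟩)
  have hMnn : 0 ≤ M := le_max_right _ _
  -- bound on a n * ρ^n
  set M' : ℝ := max M (a 0) with hM'def
  have haρ : ∀ n, a n * ρ ^ n ≤ M' := by
    intro n
    rcases Nat.eq_zero_or_pos n with h | h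
    · subst h; simp only [pow_zero, mul_one]; exact le_max_right M (a 0)
    · refine le_trans ?_ (le_max_of_le_left (hM n))
      have h1 : (1 : ℝ) ≤ (n : ℝ) ^ ((3 : ℝ) / 2) := by
        rw [show (1:ℝ) = (1:ℝ) ^ ((3:ℝ)/2) by rw [Real.one_rpow]]
        exact Real.rpow_le_rpow (by norm_num) (by exact_mod_cast h) (by norm_num)
      calc a n * ρ ^ n = a n * 1 * ρ ^ n := by ring
        _ ≤ a n * (n : ℝ) ^ ((3 : ℝ) / 2) * ρ ^ n := by
            apply mul_le_mul_of_nonneg_right _ (pow_nonneg hρ.le n)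
            exact mul_le_mul_of_nonneg_left h1 (ha0 n)
  have hM'nn : 0 ≤ M' := le_trans hMnn (le_max_left _ _)
  -- bound on b n * r^n
  obtain ⟨C0, hC0⟩ := hbr.tendsto_atTop_zero.bddAbove_range
  set C : ℝ := max C0 0 with hCdef
  have hC : ∀ n, b n * r ^ n ≤ C := fun n => le_max_of_le_left (hC0 ⟨n, rfl⟩)
  have hCnn : 0 ≤ C := le_max_right _ _
  set q : ℝ := ρ / r with hqdef
  have hq0 : 0 ≤ q := div_nonneg hρ.le hr.le
  have hq1 : q < 1 := (div_lt_one hr).mpr hρr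
  have hbρq : ∀ k : ℕ, b k * ρ ^ k = (b k * r ^ k) * q ^ k := by
    intro k
    rw [hqdef, div_pow]
    field_simp
  -- b k * ρ^k is summable
  have hbρ : Summable (fun k : ℕ => b k * ρ ^ k) := by
    refine hbr.of_nonneg_of_le (fun k => mul_nonneg (hb0 k) (pow_nonneg hρ.le k)) ?_
    intro k
    exact mul_le_mul_of_nonneg_left (pow_le_pow_left₀ hρ.le hρr.le k) (hb0 k)
  -- the summable dominating function
  set g : ℕ → ℝ := fun k =>
    (2:ℝ) ^ ((3:ℝ)/2) * M * (b k * ρ ^ k) + (2:ℝ) ^ ((3:ℝ)/2) * M' * C * ((k:ℝ)^2 * q ^ k)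
    with hgdef
  have hgsum : Summable g := by
    apply Summable.add
    · exact hbρ.mul_left _
    · refine Summable.mul_left _ ?_
      have := summable_pow_mul_geometric_of_norm_lt_one (R := ℝ) 2
        (by rwa [Real.norm_eq_abs, abs_of_nonneg hq0])
      simpa using this
  have hg0 : ∀ k, 0 ≤ g k := by
    intro k
    apply add_nonneg
    · exact mul_nonneg (mul_nonneg (Real.rpow_nonneg (by norm_num) _) hMnn)
        (mul_nonneg (hb0 k) (pow_nonneg hρ.le k))
    · exact mul_nonneg (mul_nonneg (mul_nonneg (Real.rpow_nonneg (by norm_num) _) hM'nn) hCnn)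
        (mul_nonneg (sq_nonneg _) (pow_nonneg hq0 k))
  -- the doubly-indexed family
  set f : ℕ → ℕ → ℝ := fun n k =>
    if k ≤ n then a (n - k) * b k * (n : ℝ) ^ ((3 : ℝ) / 2) * ρ ^ n else 0
    with hfdef
  have hf0 : ∀ n k, 0 ≤ f n k := by
    intro n k
    simp only [hfdef]
    split
    · exact mul_nonneg (mul_nonneg (mul_nonneg (ha0 _) (hb0 _))
        (Real.rpow_nonneg (Nat.cast_nonneg n) _)) (pow_nonneg hρ.le n)
    · exact le_refl 0
  -- rewrite original sum as tsum of f
  have key : ∀ n : ℕ,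
      (∑ k ∈ Finset.range (n + 1), a (n - k) * b k)
          * (n : ℝ) ^ ((3 : ℝ) / 2) * ρ ^ n = ∑' k, f n k := by
    intro n
    rw [tsum_eq_sum (s := Finset.range (n + 1))
      (by
        intro k hk
        simp only [Finset.mem_range, not_lt] at hk
        simp only [hfdef]
        rw [if_neg (by omega)])]
    rw [Finset.sum_mul, Finset.sum_mul]
    refine Finset.sum_congr rfl ?_
    intro k hk
    simp only [Finset.mem_range] at hk
    simp only [hfdef]
    rw [if_pos (by omega)]
  -- pointwise limit
  have hlim : ∀ k : ℕ, Tendsto (fun n => f n k) atTop (nhds (c * (b k * ρ ^ k))) := by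
    intro k
    have L1 : Tendsto (fun n : ℕ => A (n - k)) atTop (nhds c) :=
      ha.comp (tendsto_sub_atTop_nat k)
    have L2 : Tendsto (fun n : ℕ => (n : ℝ) / ((n - k : ℕ) : ℝ)) atTop (nhds 1) := by
      have hden : Tendsto (fun n : ℕ => (n : ℝ) - (k : ℝ)) atTop atTop :=
        tendsto_atTop_add_const_right atTop (-(k:ℝ))
          tendsto_natCast_atTop_atTop |>.congr (fun n => by ring)
      have L2' : Tendsto (fun n : ℕ => 1 + (k : ℝ) / ((n : ℝ) - (k:ℝ))) atTop (nhds 1) := by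
        have := Tendsto.div_atTop (tendsto_const_nhds (x := (k:ℝ)) (f := atTop)) hden
        simpa using (tendsto_const_nhds (x := (1:ℝ))).add this
      refine L2'.congr' ?_
      filter_upwards [eventually_atTop.mpr ⟨k + 1, fun n hn => hn⟩] with n hn
      have hk : (k : ℝ) < (n : ℝ) := by exact_mod_cast hn
      have hne : (n : ℝ) - (k : ℝ) ≠ 0 := by linarith
      rw [Nat.cast_sub (by omega)]
      field_simp
      ring
    have L3 : Tendsto (fun n : ℕ => ((n : ℝ) / ((n - k : ℕ) : ℝ)) ^ ((3:ℝ)/2))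
        atTop (nhds 1) := by
      have := L2.rpow_const (p := (3:ℝ)/2) (Or.inr (by norm_num))
      simpa [Real.one_rpow] using this
    have Lmain : Tendsto
        (fun n : ℕ => A (n - k) * (b k * ρ ^ k) * ((n : ℝ) / ((n - k : ℕ) : ℝ)) ^ ((3:ℝ)/2))
        atTop (nhds (c * (b k * ρ ^ k))) := by
      have := (L1.mul tendsto_const_nhds (b := b k * ρ ^ k)).mul L3
      simpa using this
    refine Lmain.congr' ?_
    filter_upwards [eventually_atTop.mpr ⟨k + 1, fun n hn => hn⟩] with n hn
    have hkn : k ≤ n := by omega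
    have hpos : (0 : ℝ) < (n : ℝ) - (k : ℝ) := by
      have h1 : (k : ℝ) < (n : ℝ) := by exact_mod_cast hn
      linarith
    simp only [hfdef, hA]
    rw [if_pos hkn]
    rw [Real.div_rpow (Nat.cast_nonneg n) (Nat.cast_nonneg (n - k)), Nat.cast_sub hkn]
    have hne : ((n : ℝ) - (k : ℝ)) ^ ((3:ℝ)/2) ≠ 0 :=
      (Real.rpow_pos_of_pos hpos _).ne'
    have hpow : ρ ^ (n - k) * ρ ^ k = ρ ^ n := pow_sub_mul_pow ρ hkn
    field_simp
    rw [← hpow]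
    ring
  -- domination
  have hbound : ∀ᶠ n in atTop, ∀ k, ‖f n k‖ ≤ g k := by
    filter_upwards [eventually_atTop.mpr ⟨1, fun n hn => hn⟩] with n hn k
    rw [Real.norm_eq_abs, abs_of_nonneg (hf0 n k)]
    simp only [hfdef, hgdef, hA]
    by_cases hkn : k ≤ n
    · rw [if_pos hkn]
      by_cases h2 : 2 * k ≤ n
      · -- small k: use first summand
        have hmk : k ≤ n - k := by omega
        have hcast : (n : ℝ) ≤ 2 * ((n - k : ℕ) : ℝ) := by
          have : n ≤ 2 * (n - k) := by omega
          exact_mod_cast this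
        have hstep : ((n:ℝ)) ^ ((3:ℝ)/2) ≤ (2:ℝ) ^ ((3:ℝ)/2) * ((n - k : ℕ) : ℝ) ^ ((3:ℝ)/2) := by
          rw [← Real.mul_rpow (by norm_num) (Nat.cast_nonneg _)]
          exact Real.rpow_le_rpow (Nat.cast_nonneg n) hcast (by norm_num)
        have hpow : ρ ^ n = ρ ^ (n - k) * ρ ^ k := (pow_sub_mul_pow ρ hkn).symm
        have h1 : a (n - k) * b k * (n : ℝ) ^ ((3:ℝ)/2) * ρ ^ n
            ≤ (2:ℝ) ^ ((3:ℝ)/2) * (A (n - k)) * (b k * ρ ^ k) := by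
          rw [hpow, hA]
          have := mul_le_mul_of_nonneg_left hstep (mul_nonneg (ha0 (n-k)) (hb0 k))
          calc a (n - k) * b k * (n : ℝ) ^ ((3:ℝ)/2) * (ρ ^ (n-k) * ρ ^ k)
              = (a (n-k) * b k * (n:ℝ) ^ ((3:ℝ)/2)) * (ρ ^ (n-k) * ρ ^ k) := by ring
            _ ≤ (a (n-k) * b k * ((2:ℝ) ^ ((3:ℝ)/2) * ((n - k : ℕ) : ℝ) ^ ((3:ℝ)/2)))
                * (ρ ^ (n-k) * ρ ^ k) := by
                apply mul_le_mul_of_nonneg_right _ (mul_nonneg (pow_nonneg hρ.le _) (pow_nonneg hρ.le _))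
                calc a (n - k) * b k * (n : ℝ) ^ ((3:ℝ)/2)
                    = (a (n-k) * b k) * (n:ℝ) ^ ((3:ℝ)/2) := by ring
                  _ ≤ (a (n-k) * b k) * ((2:ℝ) ^ ((3:ℝ)/2) * ((n - k : ℕ) : ℝ) ^ ((3:ℝ)/2)) := this
                  _ = a (n-k) * b k * ((2:ℝ) ^ ((3:ℝ)/2) * ((n - k : ℕ) : ℝ) ^ ((3:ℝ)/2)) := by ring
            _ = (2:ℝ) ^ ((3:ℝ)/2) * (a (n-k) * ((n - k : ℕ):ℝ) ^ ((3:ℝ)/2) * ρ ^ (n-k))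
                * (b k * ρ ^ k) := by ring
        refine le_trans h1 ?_
        have h2' : (2:ℝ) ^ ((3:ℝ)/2) * (A (n-k)) * (b k * ρ ^ k)
            ≤ (2:ℝ) ^ ((3:ℝ)/2) * M * (b k * ρ ^ k) := by
          apply mul_le_mul_of_nonneg_right _ (mul_nonneg (hb0 k) (pow_nonneg hρ.le k))
          exact mul_le_mul_of_nonneg_left (hM _) (Real.rpow_nonneg (by norm_num) _)
        refine le_trans h2' (le_add_of_nonneg_right ?_)
        exact mul_nonneg (mul_nonneg (mul_nonneg (Real.rpow_nonneg (by norm_num) _) hM'nn) hCnn)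
          (mul_nonneg (sq_nonneg _) (pow_nonneg hq0 k))
      · -- large k: use second summand
        push_neg at h2
        have hk1 : 1 ≤ k := by omega
        have hcast : (n : ℝ) ≤ 2 * (k : ℝ) := by
          have : n ≤ 2 * k := by omega
          exact_mod_cast this
        have hn32 : ((n:ℝ)) ^ ((3:ℝ)/2) ≤ (2:ℝ) ^ ((3:ℝ)/2) * ((k:ℝ)) ^ ((3:ℝ)/2) := by
          rw [← Real.mul_rpow (by norm_num) (Nat.cast_nonneg _)]
          exact Real.rpow_le_rpow (Nat.cast_nonneg n) hcast (by norm_num)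
        have hk32 : ((k:ℝ)) ^ ((3:ℝ)/2) ≤ (k:ℝ) ^ 2 := by
          rw [show ((k:ℝ)) ^ 2 = ((k:ℝ)) ^ ((2:ℕ):ℝ) by rw [Real.rpow_natCast]]
          exact Real.rpow_le_rpow_of_exponent_le (by exact_mod_cast hk1) (by norm_num)
        have hpow : ρ ^ n = ρ ^ (n - k) * ρ ^ k := (pow_sub_mul_pow ρ hkn).symm
        have hbq : b k * ρ ^ k ≤ C * q ^ k := by
          rw [hbρq k]
          exact mul_le_mul_of_nonneg_right (hC k) (pow_nonneg hq0 k)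
        have h1 : a (n - k) * b k * (n : ℝ) ^ ((3:ℝ)/2) * ρ ^ n
            ≤ M' * ((2:ℝ) ^ ((3:ℝ)/2) * (k:ℝ) ^ 2) * (C * q ^ k) := by
          rw [hpow]
          have e1 : a (n - k) * b k * (n : ℝ) ^ ((3:ℝ)/2) * (ρ ^ (n-k) * ρ ^ k)
              = (a (n-k) * ρ ^ (n-k)) * ((n:ℝ) ^ ((3:ℝ)/2)) * (b k * ρ ^ k) := by ring
          rw [e1]
          have t1 : (a (n-k) * ρ ^ (n-k)) * ((n:ℝ) ^ ((3:ℝ)/2)) * (b k * ρ ^ k)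
              ≤ M' * ((n:ℝ) ^ ((3:ℝ)/2)) * (b k * ρ ^ k) := by
            apply mul_le_mul_of_nonneg_right _ (mul_nonneg (hb0 k) (pow_nonneg hρ.le k))
            exact mul_le_mul_of_nonneg_right (haρ _) (Real.rpow_nonneg (Nat.cast_nonneg n) _)
          refine le_trans t1 ?_
          have t2 : ((n:ℝ)) ^ ((3:ℝ)/2) ≤ (2:ℝ) ^ ((3:ℝ)/2) * (k:ℝ) ^ 2 := by
            refine le_trans hn32 ?_
            exact mul_le_mul_of_nonneg_left hk32 (Real.rpow_nonneg (by norm_num) _)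
          have t3 : M' * ((n:ℝ) ^ ((3:ℝ)/2)) * (b k * ρ ^ k)
              ≤ M' * ((2:ℝ) ^ ((3:ℝ)/2) * (k:ℝ) ^ 2) * (b k * ρ ^ k) := by
            apply mul_le_mul_of_nonneg_right _ (mul_nonneg (hb0 k) (pow_nonneg hρ.le k))
            exact mul_le_mul_of_nonneg_left t2 hM'nn
          refine le_trans t3 ?_
          exact mul_le_mul_of_nonneg_left hbq
            (mul_nonneg hM'nn (mul_nonneg (Real.rpow_nonneg (by norm_num) _) (sq_nonneg _)))
        refine le_trans h1 ?_
        refine le_trans (le_of_eq ?_) (le_add_of_nonneg_left ?_)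
        · ring
        · exact mul_nonneg (mul_nonneg (Real.rpow_nonneg (by norm_num) _) hMnn)
            (mul_nonneg (hb0 k) (pow_nonneg hρ.le k))
    · rw [if_neg hkn]
      exact hg0 k
  have main := tendsto_tsum_of_dominated_convergence hgsum hlim hbound
  have htsum : (∑' k : ℕ, c * (b k * ρ ^ k)) = c * ∑' k : ℕ, b k * ρ ^ k :=
    tsum_mul_left
  rw [htsum] at main
  refine main.congr ?_
  intro n
  exact (key n).symm
end

section
/- Let ρ > 0 and c > 0, and let (a_n)_{n≥0}, (b_n)_{n≥0} be sequences of nonnegative reals such that a_n·n^{3/2}·ρ^n → c as n → ∞ and such that Σ_{n≥0} b_n·r^n < ∞ for some r > ρ, and assume Σ_{k≥0} b_k·ρ^k > 0. Then for every fixed k ≥ 0, the ratio (a_{n−k}·b_k) / (Σ_{j=0}^{n} a_{n−j}·b_j) converges, as n → ∞, to (ρ^k·b_k) / (Σ_{j≥0} ρ^j·b_j). In particular these limits sum to 1 over k, so the index distribution given by these ratios converges weakly to the Boltzmann-type distribution with weights proportional to ρ^k·b_k. -/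
open Filter

set_option maxHeartbeats 1600000
set_option maxHeartbeats 1600000

lemma aux_ratio (ρ c : ℝ) (hρ : 0 < ρ) (hc : 0 < c) (a : ℕ → ℝ)
    (ha : Tendsto (fun n : ℕ => a n * (n : ℝ) ^ ((3 : ℝ) / 2) * ρ ^ n) atTop (nhds c))
    (m : ℕ) : Tendsto (fun n : ℕ => a (n - m) / a n) atTop (nhds (ρ ^ m)) := by
  set φ : ℕ → ℝ := fun n => a n * (n : ℝ) ^ ((3 : ℝ) / 2) * ρ ^ n with hφdef
  have h1 : Tendsto (fun n : ℕ => φ (n - m) / φ n) atTop (nhds 1) := by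
    have := (ha.comp (tendsto_sub_atTop_nat m)).div ha hc.ne'
    rw [div_self hc.ne'] at this
    exact this
  have hx : Tendsto (fun n : ℕ => (n : ℝ) / ((n : ℝ) - m)) atTop (nhds 1) := by
    have h0 : Tendsto (fun n : ℕ => (m : ℝ) / ((n : ℝ) - m)) atTop (nhds 0) :=
      Tendsto.div_atTop tendsto_const_nhds
        (tendsto_atTop_add_const_right atTop (-(m : ℝ)) tendsto_natCast_atTop_atTop)
    have h1' : Tendsto (fun n : ℕ => 1 + (m : ℝ) / ((n : ℝ) - m)) atTop (nhds 1) := by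
      simpa using (tendsto_const_nhds (x := (1:ℝ)) (f := atTop (α := ℕ))).add h0
    apply h1'.congr'
    filter_upwards [eventually_gt_atTop m] with n hn
    have hmn : (m : ℝ) < n := by exact_mod_cast hn
    have hne : (n : ℝ) - m ≠ 0 := by linarith
    field_simp
    ring
  have h2 : Tendsto (fun n : ℕ => ((n : ℝ) / ((n : ℝ) - m)) ^ ((3 : ℝ) / 2)) atTop (nhds 1) := by
    have hcont := (Real.continuousAt_rpow_const 1 ((3 : ℝ) / 2) (Or.inl one_ne_zero)).tendsto
    have := hcont.comp hx
    simpa [Real.one_rpow, Function.comp_def] using this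
  -- eventual positivity of a n
  have hev : ∀ᶠ n in atTop, c / 2 ≤ φ n := ha.eventually (eventually_ge_nhds (by linarith))
  obtain ⟨N, hN⟩ := eventually_atTop.1 hev
  have key : Tendsto (fun n : ℕ => φ (n - m) / φ n * ((n : ℝ) / ((n : ℝ) - m)) ^ ((3 : ℝ) / 2) * ρ ^ m)
      atTop (nhds (ρ ^ m)) := by
    have := (h1.mul h2).mul (tendsto_const_nhds (x := ρ ^ m) (f := atTop (α := ℕ)))
    simpa using this
  apply key.congr'
  filter_upwards [eventually_ge_atTop (N + m + 1)] with n hn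
  have hm1 : m + 1 ≤ n := by omega
  have hnm : m ≤ n := by omega
  have hNn : N ≤ n := by omega
  have hNnm : N ≤ n - m := by omega
  have hφn : 0 < φ n := lt_of_lt_of_le (by linarith) (hN n hNn)
  have hφnm : 0 < φ (n - m) := lt_of_lt_of_le (by linarith) (hN (n - m) hNnm)
  have han : a n ≠ 0 := by
    intro h
    rw [hφdef] at hφn
    simp only [h, zero_mul] at hφn
    exact lt_irrefl 0 hφn
  have hcast : ((n - m : ℕ) : ℝ) = (n : ℝ) - m := by
    rw [Nat.cast_sub hnm]
  have hnpos : (0 : ℝ) < (n : ℝ) := by exact_mod_cast (show 0 < n by omega)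
  have hnmpos : (0 : ℝ) < (n : ℝ) - m := by
    have : (m : ℝ) < n := by exact_mod_cast (by omega : m < n)
    linarith
  have hrn : (0 : ℝ) < (n : ℝ) ^ ((3 : ℝ) / 2) := Real.rpow_pos_of_pos hnpos _
  have hrnm : (0 : ℝ) < ((n : ℝ) - m) ^ ((3 : ℝ) / 2) := Real.rpow_pos_of_pos hnmpos _
  have hdiv : ((n : ℝ) / ((n : ℝ) - m)) ^ ((3 : ℝ) / 2)
      = (n : ℝ) ^ ((3 : ℝ) / 2) / ((n : ℝ) - m) ^ ((3 : ℝ) / 2) :=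
    Real.div_rpow hnpos.le hnmpos.le _
  have hpow : ρ ^ (n - m) * ρ ^ m = ρ ^ n := by
    rw [← pow_add, Nat.sub_add_cancel hnm]
  rw [hφdef]
  simp only [hdiv, hcast]
  field_simp
  rw [← hpow]
  ring

lemma aux_sum (ρ c r : ℝ) (hρ : 0 < ρ) (hc : 0 < c) (hρr : ρ < r) (a b : ℕ → ℝ)
    (ha0 : ∀ n, 0 ≤ a n) (hb0 : ∀ n, 0 ≤ b n)
    (ha : Tendsto (fun n : ℕ => a n * (n : ℝ) ^ ((3 : ℝ) / 2) * ρ ^ n) atTop (nhds c))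
    (hbr : Summable (fun n : ℕ => b n * r ^ n)) :
    Tendsto (fun n : ℕ => (∑ j ∈ Finset.range (n + 1), a (n - j) * b j) / a n)
      atTop (nhds (∑' j : ℕ, ρ ^ j * b j)) := by
  have hr : (0 : ℝ) < r := hρ.trans hρr
  have hq1 : ρ / r < 1 := (div_lt_one hr).2 hρr
  have hq0 : 0 ≤ ρ / r := by positivity
  set φ : ℕ → ℝ := fun n => a n * (n : ℝ) ^ ((3 : ℝ) / 2) * ρ ^ n with hφdef
  -- upper bound on φ
  obtain ⟨M, hM⟩ := ha.bddAbove_range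
  have hM' : ∀ n, φ n ≤ M := fun n => hM ⟨n, rfl⟩
  have hM0 : 0 ≤ M := by
    refine le_trans ?_ (hM' 1)
    rw [hφdef]
    have h1 := ha0 1
    positivity
  set M2 : ℝ := max M (a 0) with hM2def
  have hM2a : a 0 ≤ M2 := le_max_right _ _
  have hM2M : M ≤ M2 := le_max_left _ _
  have hM20 : 0 ≤ M2 := hM0.trans hM2M
  -- upper bound on b n * r^n
  obtain ⟨B, hB⟩ := (hbr.tendsto_atTop_zero).bddAbove_range
  have hB' : ∀ n, b n * r ^ n ≤ B := fun n => hB ⟨n, rfl⟩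
  have hB0 : 0 ≤ B := le_trans (mul_nonneg (hb0 0) (by positivity)) (hB' 0)
  -- eventual lower bound
  have hev : ∀ᶠ n in atTop, c / 2 ≤ φ n := ha.eventually (eventually_ge_nhds (by linarith))
  obtain ⟨N, hN⟩ := eventually_atTop.1 hev
  -- summable of ρ^j b j
  have hsum : Summable (fun j : ℕ => ρ ^ j * b j) := by
    refine Summable.of_nonneg_of_le (fun j => mul_nonneg (by positivity) (hb0 j)) (fun j => ?_) hbr
    rw [mul_comm]
    exact mul_le_mul_of_nonneg_left (pow_le_pow_left₀ hρ.le hρr.le j) (hb0 j)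
  -- dominating function
  set C1 : ℝ := 2 * M * (2 : ℝ) ^ ((3 : ℝ) / 2) / c with hC1def
  set C2 : ℝ := 2 * M2 * B / c with hC2def
  have hC10 : 0 ≤ C1 := by positivity
  have hC20 : 0 ≤ C2 := by positivity
  set g : ℕ → ℝ := fun j => C1 * (ρ ^ j * b j) + C2 * ((2 * (j : ℝ)) ^ 2 * (ρ / r) ^ j)
    with hgdef
  have hgsum : Summable g := by
    apply Summable.add (hsum.mul_left C1)
    have h2 : Summable (fun j : ℕ => (j : ℝ) ^ 2 * (ρ / r) ^ j) := by
      have := summable_pow_mul_geometric_of_norm_lt_one (R := ℝ) 2 (r := ρ / r)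
        (by rwa [Real.norm_eq_abs, abs_of_nonneg hq0])
      exact this
    apply ((h2.mul_left 4).mul_left C2).congr
    intro j; ring
  set f : ℕ → ℕ → ℝ := fun n j => if j ≤ n then a (n - j) * b j / a n else 0 with hfdef
  -- pointwise limits
  have hA := aux_ratio ρ c hρ hc a ha
  have hlim : ∀ j : ℕ, Tendsto (fun n => f n j) atTop (nhds (ρ ^ j * b j)) := by
    intro j
    have h := (hA j).mul_const (b j)
    apply h.congr'
    filter_upwards [eventually_ge_atTop j] with n hn
    rw [hfdef]
    simp only [if_pos hn]
    rw [mul_div_right_comm]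
  -- domination
  have hbound : ∀ᶠ n in atTop, ∀ j, ‖f n j‖ ≤ g j := by
    have hg0 : ∀ j, 0 ≤ g j := by
      intro j
      rw [hgdef]
      have h1 := hb0 j
      positivity
    filter_upwards [eventually_ge_atTop (max N 1)] with n hn j
    have hNn : N ≤ n := le_trans (le_max_left _ _) hn
    have hn1 : 1 ≤ n := le_trans (le_max_right _ _) hn
    by_cases hjn : j ≤ n
    swap
    · rw [hfdef]; simp only [if_neg hjn, norm_zero]; exact hg0 j
    rw [hfdef]
    simp only [if_pos hjn]
    have hnpos : (0 : ℝ) < (n : ℝ) := by exact_mod_cast (show 0 < n by omega)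
    have hP : (0 : ℝ) < (n : ℝ) ^ ((3 : ℝ) / 2) * ρ ^ n := by positivity
    have hφn : c / 2 ≤ φ n := hN n hNn
    have han : 0 < a n := by
      rcases lt_or_ge 0 (a n) with h | h
      · exact h
      · exfalso
        have h2 : φ n ≤ 0 := by
          have h3 : a n * ((n : ℝ) ^ ((3 : ℝ) / 2) * ρ ^ n) ≤ 0 :=
            mul_nonpos_of_nonpos_of_nonneg h hP.le
          simp only [hφdef]
          nlinarith [h3]
        linarith
    have hnorm : ‖a (n - j) * b j / a n‖ = a (n - j) * b j / a n := by
      rw [Real.norm_eq_abs, abs_of_nonneg (div_nonneg (mul_nonneg (ha0 _) (hb0 _)) han.le)]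
    rw [hnorm]
    have halow : c / (2 * ((n : ℝ) ^ ((3 : ℝ) / 2) * ρ ^ n)) ≤ a n := by
      rw [div_le_iff₀ (by positivity)]
      have h4 : φ n = a n * ((n : ℝ) ^ ((3 : ℝ) / 2) * ρ ^ n) := by simp only [hφdef]; ring
      rw [h4] at hφn
      linarith
    have hstep1 : a (n - j) * b j / a n
        ≤ a (n - j) * b j * (2 * ((n : ℝ) ^ ((3 : ℝ) / 2) * ρ ^ n)) / c := by
      calc a (n - j) * b j / a n
          ≤ a (n - j) * b j / (c / (2 * ((n : ℝ) ^ ((3 : ℝ) / 2) * ρ ^ n))) := by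
            have hx0 : 0 ≤ a (n - j) * b j := mul_nonneg (ha0 _) (hb0 _)
            have hcp : (0 : ℝ) < c / (2 * ((n : ℝ) ^ ((3 : ℝ) / 2) * ρ ^ n)) := by positivity
            gcongr
        _ = a (n - j) * b j * (2 * ((n : ℝ) ^ ((3 : ℝ) / 2) * ρ ^ n)) / c := by
            rw [div_div_eq_mul_div]
    by_cases hj2 : 2 * j ≤ n
    · -- small j case
      have hnj1 : 1 ≤ n - j := by omega
      have hnjpos : (0 : ℝ) < ((n - j : ℕ) : ℝ) := by exact_mod_cast (show 0 < n - j by omega)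
      have hQ : (0 : ℝ) < ((n - j : ℕ) : ℝ) ^ ((3 : ℝ) / 2) * ρ ^ (n - j) := by positivity
      have hup : a (n - j) ≤ M / (((n - j : ℕ) : ℝ) ^ ((3 : ℝ) / 2) * ρ ^ (n - j)) := by
        rw [le_div_iff₀ hQ]
        have h5 := hM' (n - j)
        simp only [hφdef] at h5
        nlinarith [h5]
      have hrpow : (n : ℝ) ^ ((3 : ℝ) / 2)
          ≤ (2 : ℝ) ^ ((3 : ℝ) / 2) * ((n - j : ℕ) : ℝ) ^ ((3 : ℝ) / 2) := by
        rw [← Real.mul_rpow (by norm_num) hnjpos.le]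
        apply Real.rpow_le_rpow hnpos.le _ (by norm_num)
        have : (n : ℝ) ≤ 2 * ((n - j : ℕ) : ℝ) := by
          have : n ≤ 2 * (n - j) := by omega
          exact_mod_cast this
        exact this
      have hpow : ρ ^ n = ρ ^ (n - j) * ρ ^ j := by
        rw [← pow_add, Nat.sub_add_cancel hjn]
      have hstep2 : a (n - j) * b j * (2 * ((n : ℝ) ^ ((3 : ℝ) / 2) * ρ ^ n)) / c
          ≤ C1 * (ρ ^ j * b j) := by
        have hX : a (n - j) * b j * (2 * ((n : ℝ) ^ ((3 : ℝ) / 2) * ρ ^ n)) / c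
            ≤ (M / (((n - j : ℕ) : ℝ) ^ ((3 : ℝ) / 2) * ρ ^ (n - j))) * b j
              * (2 * ((n : ℝ) ^ ((3 : ℝ) / 2) * ρ ^ n)) / c := by
          gcongr
          exact hb0 j
        refine hX.trans ?_
        have heq : (M / (((n - j : ℕ) : ℝ) ^ ((3 : ℝ) / 2) * ρ ^ (n - j))) * b j
              * (2 * ((n : ℝ) ^ ((3 : ℝ) / 2) * ρ ^ n)) / c
            = (2 * M * b j * ρ ^ j / c)
              * ((n : ℝ) ^ ((3 : ℝ) / 2) / ((n - j : ℕ) : ℝ) ^ ((3 : ℝ) / 2)) := by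
          have e1 : ((n - j : ℕ) : ℝ) ^ ((3 : ℝ) / 2) ≠ 0 := by positivity
          have e2 : ρ ^ (n - j) ≠ 0 := by positivity
          rw [hpow]
          have hcancel : ρ ^ (n - j) * ρ⁻¹ ^ (n - j) = 1 := by
            rw [inv_pow, mul_inv_cancel₀ (pow_ne_zero _ hρ.ne')]
          field_simp [hρ.ne']
        rw [heq]
        have hle : (n : ℝ) ^ ((3 : ℝ) / 2) / ((n - j : ℕ) : ℝ) ^ ((3 : ℝ) / 2)
            ≤ (2 : ℝ) ^ ((3 : ℝ) / 2) := by
          rw [div_le_iff₀ (by positivity)]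
          linarith [hrpow]
        calc (2 * M * b j * ρ ^ j / c)
              * ((n : ℝ) ^ ((3 : ℝ) / 2) / ((n - j : ℕ) : ℝ) ^ ((3 : ℝ) / 2))
            ≤ (2 * M * b j * ρ ^ j / c) * (2 : ℝ) ^ ((3 : ℝ) / 2) := by
              have hx1 : 0 ≤ 2 * M * b j * ρ ^ j / c :=
                div_nonneg (mul_nonneg (mul_nonneg (by linarith) (hb0 j)) (by positivity)) hc.le
              gcongr
          _ = C1 * (ρ ^ j * b j) := by rw [hC1def]; ring
      refine (hstep1.trans hstep2).trans ?_
      rw [hgdef]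
      have : 0 ≤ C2 * ((2 * (j : ℝ)) ^ 2 * (ρ / r) ^ j) := by positivity
      linarith
    · -- large j case : n < 2j
      push_neg at hj2
      have hj1 : 1 ≤ j := by omega
      have hup2 : a (n - j) ≤ M2 / ρ ^ (n - j) := by
        rcases Nat.eq_zero_or_pos (n - j) with h0 | h0
        · rw [h0]; simpa using hM2a
        · have hnjpos : (0 : ℝ) < ((n - j : ℕ) : ℝ) := by exact_mod_cast h0
          have hone : (1 : ℝ) ≤ ((n - j : ℕ) : ℝ) ^ ((3 : ℝ) / 2) := by
            have := Real.rpow_le_rpow (by norm_num : (0:ℝ) ≤ 1)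
              (by exact_mod_cast h0 : (1 : ℝ) ≤ ((n - j : ℕ) : ℝ)) (by norm_num : (0:ℝ) ≤ (3:ℝ)/2)
            simpa [Real.one_rpow] using this
          have hQ : (0 : ℝ) < ((n - j : ℕ) : ℝ) ^ ((3 : ℝ) / 2) * ρ ^ (n - j) := by positivity
          have hup : a (n - j) ≤ M / (((n - j : ℕ) : ℝ) ^ ((3 : ℝ) / 2) * ρ ^ (n - j)) := by
            rw [le_div_iff₀ hQ]
            have := hM' (n - j)
            rw [hφdef] at this
            nlinarith [this]
          refine hup.trans ?_
          rw [div_le_div_iff₀ hQ (by positivity)]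
          have hρpow : (0 : ℝ) < ρ ^ (n - j) := by positivity
          have h1 : M * ρ ^ (n - j) ≤ M2 * ρ ^ (n - j) :=
            mul_le_mul_of_nonneg_right hM2M hρpow.le
          have h2 : M2 * ρ ^ (n - j) * 1 ≤ M2 * ρ ^ (n - j) * (((n - j : ℕ) : ℝ) ^ ((3 : ℝ) / 2)) :=
            mul_le_mul_of_nonneg_left hone (mul_nonneg hM20 hρpow.le)
          nlinarith [h1, h2]
      have hbj : b j ≤ B / r ^ j := by
        rw [le_div_iff₀ (by positivity)]
        exact hB' j
      have hpow : ρ ^ n = ρ ^ (n - j) * ρ ^ j := by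
        rw [← pow_add, Nat.sub_add_cancel hjn]
      have hn32 : (n : ℝ) ^ ((3 : ℝ) / 2) ≤ (2 * (j : ℝ)) ^ 2 := by
        have h2j1 : (1 : ℝ) ≤ 2 * (j : ℝ) := by
          have : (1 : ℝ) ≤ (j : ℝ) := by exact_mod_cast hj1
          linarith
        have hle1 : (n : ℝ) ^ ((3 : ℝ) / 2) ≤ (2 * (j : ℝ)) ^ ((3 : ℝ) / 2) := by
          apply Real.rpow_le_rpow hnpos.le _ (by norm_num)
          have : (n : ℝ) ≤ 2 * (j : ℝ) := by exact_mod_cast hj2.le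
          exact this
        have hle2 : (2 * (j : ℝ)) ^ ((3 : ℝ) / 2) ≤ (2 * (j : ℝ)) ^ ((2 : ℕ) : ℝ) := by
          apply Real.rpow_le_rpow_of_exponent_le h2j1
          norm_num
        rw [Real.rpow_natCast] at hle2
        exact hle1.trans hle2
      have hstep2 : a (n - j) * b j * (2 * ((n : ℝ) ^ ((3 : ℝ) / 2) * ρ ^ n)) / c
          ≤ C2 * ((2 * (j : ℝ)) ^ 2 * (ρ / r) ^ j) := by
        have hX : a (n - j) * b j * (2 * ((n : ℝ) ^ ((3 : ℝ) / 2) * ρ ^ n)) / c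
            ≤ (M2 / ρ ^ (n - j)) * (B / r ^ j) * (2 * ((n : ℝ) ^ ((3 : ℝ) / 2) * ρ ^ n)) / c := by
          have hx0 : 0 ≤ a (n - j) := ha0 _
          have hx1 : 0 ≤ b j := hb0 j
          gcongr
        refine hX.trans ?_
        have heq : (M2 / ρ ^ (n - j)) * (B / r ^ j) * (2 * ((n : ℝ) ^ ((3 : ℝ) / 2) * ρ ^ n)) / c
            = (2 * M2 * B / c) * ((n : ℝ) ^ ((3 : ℝ) / 2)) * (ρ / r) ^ j := by
          have e2 : ρ ^ (n - j) ≠ 0 := by positivity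
          have e3 : r ^ j ≠ 0 := by positivity
          rw [hpow, div_pow]
          field_simp [hρ.ne', hr.ne']
        rw [heq, hC2def]
        calc (2 * M2 * B / c) * ((n : ℝ) ^ ((3 : ℝ) / 2)) * (ρ / r) ^ j
            ≤ (2 * M2 * B / c) * ((2 * (j : ℝ)) ^ 2) * (ρ / r) ^ j := by
              gcongr
          _ = 2 * M2 * B / c * ((2 * (j : ℝ)) ^ 2 * (ρ / r) ^ j) := by ring
      refine (hstep1.trans hstep2).trans ?_
      rw [hgdef]
      have : 0 ≤ C1 * (ρ ^ j * b j) :=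
        mul_nonneg hC10 (mul_nonneg (by positivity) (hb0 j))
      linarith
  -- apply Tannery
  have hT := tendsto_tsum_of_dominated_convergence hgsum hlim hbound
  apply hT.congr'
  filter_upwards [eventually_ge_atTop (max N 1)] with n hn
  have hNn : N ≤ n := le_trans (le_max_left _ _) hn
  have hn1 : 1 ≤ n := le_trans (le_max_right _ _) hn
  have htsum : (∑' j : ℕ, f n j) = ∑ j ∈ Finset.range (n + 1), (a (n - j) * b j / a n) := by
    rw [tsum_eq_sum (s := Finset.range (n + 1))]
    · apply Finset.sum_congr rfl
      intro j hj
      rw [hfdef]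
      simp only [if_pos (Finset.mem_range_succ_iff.1 hj)]
    · intro j hj
      have hj' : n + 1 ≤ j := by simpa [Finset.mem_range, not_lt] using hj
      rw [hfdef]
      simp only [if_neg (by omega : ¬ j ≤ n)]
  rw [htsum, Finset.sum_div]


/-- If `a_n·n^{3/2}·ρ^n → c > 0` and `Σ b_n·r^n < ∞` for some `r > ρ`, with
`Σ b_k·ρ^k > 0`, then for every fixed `k` the ratio
`(a_{n−k}·b_k)/(Σ_{j=0}^{n} a_{n−j}·b_j)` converges to
`(ρ^k·b_k)/(Σ_{j≥0} ρ^j·b_j)`, and these limits sum to `1` over `k`. -/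
theorem component_size_boltzmann_limit (ρ c : ℝ) (hρ : 0 < ρ) (hc : 0 < c)
    (a b : ℕ → ℝ) (ha0 : ∀ n, 0 ≤ a n) (hb0 : ∀ n, 0 ≤ b n)
    (ha : Tendsto (fun n : ℕ => a n * (n : ℝ) ^ ((3 : ℝ) / 2) * ρ ^ n)
      atTop (nhds c))
    (hb : ∃ r : ℝ, ρ < r ∧ Summable (fun n : ℕ => b n * r ^ n))
    (hpos : 0 < ∑' j : ℕ, ρ ^ j * b j) :
    (∀ k : ℕ, Tendsto (fun n : ℕ =>
        (a (n - k) * b k) / (∑ j ∈ Finset.range (n + 1), a (n - j) * b j))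
      atTop (nhds ((ρ ^ k * b k) / (∑' j : ℕ, ρ ^ j * b j)))) ∧
    (∑' k : ℕ, (ρ ^ k * b k) / (∑' j : ℕ, ρ ^ j * b j)) = 1 := by
  obtain ⟨r, hρr, hbr⟩ := hb
  constructor
  · intro k
    have hB := aux_sum ρ c r hρ hc hρr a b ha0 hb0 ha hbr
    have hnum : Tendsto (fun n : ℕ => a (n - k) * b k / a n) atTop
        (nhds (ρ ^ k * b k)) := by
      have h := (aux_ratio ρ c hρ hc a ha k).mul_const (b k)
      apply h.congr
      intro n
      rw [div_mul_eq_mul_div]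
    have hdiv := hnum.div hB hpos.ne'
    apply hdiv.congr'
    have hev1 : ∀ᶠ n : ℕ in atTop, 0 < a n := by
      have h := ha.eventually (eventually_gt_nhds (half_lt_self hc))
      filter_upwards [h, eventually_ge_atTop 1] with n hn hn1
      by_contra hle
      push_neg at hle
      have hX : (0 : ℝ) ≤ (n : ℝ) ^ ((3 : ℝ) / 2) := by positivity
      have hY : (0 : ℝ) < ρ ^ n := by positivity
      have h3 : a n * (n : ℝ) ^ ((3 : ℝ) / 2) ≤ 0 :=
        mul_nonpos_of_nonpos_of_nonneg hle hX
      have h4 : a n * (n : ℝ) ^ ((3 : ℝ) / 2) * ρ ^ n ≤ 0 :=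
        mul_nonpos_of_nonpos_of_nonneg h3 hY.le
      linarith
    have hev2 : ∀ᶠ n : ℕ in atTop,
        0 < (∑ j ∈ Finset.range (n + 1), a (n - j) * b j) / a n :=
      hB.eventually (eventually_gt_nhds hpos)
    filter_upwards [hev1, hev2] with n h1 h2
    have hF : 0 < ∑ j ∈ Finset.range (n + 1), a (n - j) * b j := by
      have h3 := mul_pos h2 h1
      rwa [div_mul_cancel₀ _ h1.ne'] at h3
    simp only [Pi.div_apply]
    field_simp
  · rw [tsum_div_const, div_self hpos.ne']
end

section
/- Let (X_i)_{i≥1} be an i.i.d. sequence of ℕ-valued random variables with n^{3/2}·P(X₁ = n) → c for some constant c > 0, and let (F, H) be an ℕ²-valued random vector, independent of the whole sequence (X_i), with E[exp(t·(F + H))] < ∞ for some t > 0. Then the random sum S := H + Σ_{i=1}^{F} X_i (empty sum = 0) satisfies P(S = n) / P(X₁ = n) → E[F] as n → ∞. -/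
open MeasureTheory ProbabilityTheory Filter Finset

private lemma aux_rpow_le_exp {t x r : ℝ} (ht : 0 < t) (hx : 0 ≤ x) (hr0 : 0 ≤ r) (hr : r ≤ 3) :
    x ^ r ≤ (1 + 27 / t ^ 3) * Real.exp (t * x) := by
  have hexp1 : (1:ℝ) ≤ Real.exp (t * x) := by
    rw [Real.one_le_exp_iff]; positivity
  have ht3 : (0:ℝ) < 27 / t ^ 3 := by positivity
  rcases le_total x 1 with hx1 | hx1
  · have h0 : x ^ r ≤ 1 := Real.rpow_le_one hx hx1 hr0
    nlinarith
  · have hx0 : (0:ℝ) ≤ 1 := zero_le_one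
    have h1 : x ^ r ≤ x ^ (3:ℝ) := Real.rpow_le_rpow_of_exponent_le hx1 hr
    have h2 : x ^ (3:ℝ) = x ^ (3:ℕ) := by
      rw [← Real.rpow_natCast x 3]; norm_num
    have h3 : (1 + t*x/3) ≤ Real.exp (t*x/3) := by
      have := Real.add_one_le_exp (t*x/3); linarith
    have h4 : (t*x/3) ^ (3:ℕ) ≤ Real.exp (t*x/3) ^ (3:ℕ) := by
      have h5 : (t*x/3) ≤ 1 + t*x/3 := by linarith
      have h6 : (0:ℝ) ≤ t*x/3 := by positivity
      calc (t*x/3) ^ (3:ℕ) ≤ (1 + t*x/3) ^ (3:ℕ) := by gcongr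
        _ ≤ Real.exp (t*x/3) ^ (3:ℕ) := by gcongr <;> positivity
    have h7 : Real.exp (t*x/3) ^ (3:ℕ) = Real.exp (t*x) := by
      rw [← Real.exp_nat_mul]; ring_nf
    rw [h7] at h4
    have h8 : x ^ (3:ℕ) ≤ 27 / t^3 * Real.exp (t*x) := by
      have ht3' : (0:ℝ) < t ^ 3 := by positivity
      rw [div_mul_eq_mul_div, le_div_iff₀ ht3']
      nlinarith [h4]
    calc x ^ r ≤ x ^ (3:ℕ) := h2 ▸ h1
      _ ≤ 27 / t^3 * Real.exp (t*x) := h8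
      _ ≤ (1 + 27 / t ^ 3) * Real.exp (t * x) := by nlinarith

private lemma aux_tail_ub {p : ℕ → ℝ} {c : ℝ}
    (htail : Tendsto (fun n : ℕ => (n:ℝ) ^ ((3:ℝ)/2) * p n) atTop (nhds c)) :
    ∃ Cp : ℝ, 0 < Cp ∧ ∀ n : ℕ, 1 ≤ n → p n ≤ Cp * (n:ℝ) ^ (-((3:ℝ)/2)) := by
  obtain ⟨M, hM⟩ := htail.bddAbove_range
  refine ⟨max M 1, lt_of_lt_of_le one_pos (le_max_right _ _), fun n hn => ?_⟩
  have hn0 : (0:ℝ) < (n:ℝ) := by exact_mod_cast hn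
  have h1 : (n:ℝ) ^ ((3:ℝ)/2) * p n ≤ max M 1 :=
    le_trans (hM (Set.mem_range_self n)) (le_max_left _ _)
  have h2 : (n:ℝ) ^ ((3:ℝ)/2) * (n:ℝ) ^ (-((3:ℝ)/2)) = 1 := by
    rw [← Real.rpow_add hn0]; norm_num
  have h3 : (0:ℝ) < (n:ℝ) ^ (-((3:ℝ)/2)) := Real.rpow_pos_of_pos hn0 _
  calc p n = ((n:ℝ) ^ ((3:ℝ)/2) * p n) * (n:ℝ) ^ (-((3:ℝ)/2)) := by
        rw [mul_comm ((n:ℝ) ^ ((3:ℝ)/2)) (p n), mul_assoc, h2, mul_one]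
    _ ≤ max M 1 * (n:ℝ) ^ (-((3:ℝ)/2)) := by gcongr
    _ = _ := rfl

private lemma aux_tail_lb {p : ℕ → ℝ} {c : ℝ} (hc : 0 < c)
    (htail : Tendsto (fun n : ℕ => (n:ℝ) ^ ((3:ℝ)/2) * p n) atTop (nhds c)) :
    ∃ n₀ : ℕ, 1 ≤ n₀ ∧ ∀ n, n₀ ≤ n → c/2 * (n:ℝ) ^ (-((3:ℝ)/2)) ≤ p n := by
  have hev : ∀ᶠ n : ℕ in atTop, c/2 < (n:ℝ) ^ ((3:ℝ)/2) * p n :=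
    htail.eventually (eventually_gt_nhds (half_lt_self hc))
  obtain ⟨N, hN⟩ := eventually_atTop.mp hev
  refine ⟨max N 1, le_max_right _ _, fun n hn => ?_⟩
  have hn1 : 1 ≤ n := le_trans (le_max_right _ _) hn
  have hn0 : (0:ℝ) < (n:ℝ) := by exact_mod_cast hn1
  have h1 := le_of_lt (hN n (le_trans (le_max_left _ _) hn))
  have h2 : (n:ℝ) ^ (-((3:ℝ)/2)) * (n:ℝ) ^ ((3:ℝ)/2) = 1 := by
    rw [← Real.rpow_add hn0]; norm_num
  have h3 : (0:ℝ) < (n:ℝ) ^ (-((3:ℝ)/2)) := Real.rpow_pos_of_pos hn0 _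
  calc c/2 * (n:ℝ) ^ (-((3:ℝ)/2)) ≤ ((n:ℝ) ^ ((3:ℝ)/2) * p n) * (n:ℝ) ^ (-((3:ℝ)/2)) := by
        exact mul_le_mul_of_nonneg_right h1 h3.le
    _ = p n * ((n:ℝ) ^ (-((3:ℝ)/2)) * (n:ℝ) ^ ((3:ℝ)/2)) := by ring
    _ = p n := by rw [h2, mul_one]

private lemma aux_pos_of_lb {p : ℕ → ℝ} {c : ℝ} (hc : 0 < c) {n₀ : ℕ} (h1 : 1 ≤ n₀)
    (hlb : ∀ n, n₀ ≤ n → c/2 * (n:ℝ) ^ (-((3:ℝ)/2)) ≤ p n) :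
    ∀ n, n₀ ≤ n → 0 < p n := by
  intro n hn
  have hn0 : (0:ℝ) < (n:ℝ) := by exact_mod_cast lt_of_lt_of_le h1 hn
  exact lt_of_lt_of_le (by positivity) (hlb n hn)

private lemma aux_shift_ratio {p : ℕ → ℝ} {c : ℝ} (hc : 0 < c)
    (htail : Tendsto (fun n : ℕ => (n:ℝ) ^ ((3:ℝ)/2) * p n) atTop (nhds c))
    {n₀ : ℕ} (h1 : 1 ≤ n₀) (hpos : ∀ n, n₀ ≤ n → 0 < p n) (h : ℕ) :
    Tendsto (fun n => p (n - h) / p n) atTop (nhds 1) := by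
  set a : ℕ → ℝ := fun n => (n:ℝ) ^ ((3:ℝ)/2) * p n with ha
  have t1 : Tendsto (fun n => a (n - h)) atTop (nhds c) :=
    htail.comp (tendsto_sub_atTop_nat h)
  have t2 : Tendsto (fun n => a (n - h) / a n) atTop (nhds 1) := by
    have := t1.div htail hc.ne'
    rwa [div_self hc.ne'] at this
  have tsub : Tendsto (fun n : ℕ => ((n - h : ℕ):ℝ)) atTop atTop :=
    tendsto_natCast_atTop_atTop.comp (tendsto_sub_atTop_nat h)
  have t3' : Tendsto (fun n : ℕ => (n:ℝ) / ((n - h : ℕ):ℝ)) atTop (nhds 1) := by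
    have hq : Tendsto (fun n : ℕ => 1 + (h:ℝ) / ((n - h : ℕ):ℝ)) atTop (nhds 1) := by
      have hd := Tendsto.div_atTop
        (tendsto_const_nhds : Tendsto (fun _ : ℕ => (h:ℝ)) atTop (nhds (h:ℝ))) tsub
      have h2 := (tendsto_const_nhds : Tendsto (fun _ : ℕ => (1:ℝ)) atTop (nhds 1)).add hd
      simpa using h2
    refine hq.congr' ?_
    filter_upwards [eventually_ge_atTop (h+1)] with n hn
    have hm : 1 ≤ n - h := le_tsub_of_add_le_left hn
    have hm0 : (0:ℝ) < ((n - h : ℕ):ℝ) := by exact_mod_cast hm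
    have hcast : ((n:ℝ)) = ((n - h : ℕ):ℝ) + (h:ℝ) := by
      have : n - h + h = n := Nat.sub_add_cancel (le_trans (Nat.le_succ h) hn)
      exact_mod_cast (congrArg (Nat.cast (R := ℝ)) this).symm
    rw [hcast]
    field_simp
  have t3 : Tendsto (fun n : ℕ => ((n:ℝ) / ((n - h : ℕ):ℝ)) ^ ((3:ℝ)/2)) atTop (nhds 1) := by
    have hcont : ContinuousAt (fun x : ℝ => x ^ ((3:ℝ)/2)) 1 :=
      Real.continuousAt_rpow_const 1 _ (Or.inl one_ne_zero)
    have := hcont.tendsto.comp t3'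
    simpa [Real.one_rpow, Function.comp_def] using this
  have T := t2.mul t3
  rw [one_mul] at T
  refine T.congr' ?_
  filter_upwards [eventually_ge_atTop (n₀ + h)] with n hn
  have hmn : n₀ ≤ n - h := le_tsub_of_add_le_right hn
  have hm1 : 1 ≤ n - h := le_trans h1 hmn
  have hm0 : (0:ℝ) < ((n - h : ℕ):ℝ) := by exact_mod_cast hm1
  have hn0 : (0:ℝ) < (n:ℝ) := by
    have : 1 ≤ n := le_trans hm1 (Nat.sub_le n h)
    exact_mod_cast this
  have hpn : 0 < p n := hpos n (le_trans (Nat.le_add_right n₀ h) hn)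
  have hpm : 0 < p (n - h) := hpos _ hmn
  have hr1 : (0:ℝ) < ((n - h : ℕ):ℝ) ^ ((3:ℝ)/2) := Real.rpow_pos_of_pos hm0 _
  have hr2 : (0:ℝ) < (n:ℝ) ^ ((3:ℝ)/2) := Real.rpow_pos_of_pos hn0 _
  have hdiv : ((n:ℝ) / ((n - h : ℕ):ℝ)) ^ ((3:ℝ)/2)
      = (n:ℝ) ^ ((3:ℝ)/2) / ((n - h : ℕ):ℝ) ^ ((3:ℝ)/2) :=
    Real.div_rpow hn0.le hm0.le _
  rw [ha, hdiv]
  field_simp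

private lemma aux_key {p : ℕ → ℝ} {c : ℝ} (hc : 0 < c) {n₀ : ℕ}
  (hlb : ∀ n, n₀ ≤ n → c/2 * (n:ℝ) ^ (-((3:ℝ)/2)) ≤ p n)
  (hpos : ∀ n, n₀ ≤ n → 0 < p n) :
  ∀ n : ℕ, max n₀ 2 ≤ n → ∀ m : ℕ, 1 ≤ m → (n:ℝ) ≤ 2*(m:ℝ) →
    ∀ B x : ℝ, 0 ≤ B → 0 ≤ x → x ≤ B * (m:ℝ) ^ (-((3:ℝ)/2)) →
    x / p n ≤ B * 2 ^ ((5:ℝ)/2) / c := by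
  intro n hn m hm hnm B x hB hx hxB
  have hnn₀ : n₀ ≤ n := le_trans (le_max_left _ _) hn
  have hn2 : (2:ℕ) ≤ n := le_trans (le_max_right _ _) hn
  have hn0 : (0:ℝ) < (n:ℝ) := by exact_mod_cast lt_of_lt_of_le two_pos hn2
  have hm0 : (0:ℝ) < (m:ℝ) := by exact_mod_cast hm
  have hpn : 0 < p n := hpos n hnn₀
  have hlbn : c/2 * (n:ℝ) ^ (-((3:ℝ)/2)) ≤ p n := hlb n hnn₀
  -- (m:ℝ) ^ (-(3/2)) ≤ 2^(3/2) * n^(-(3/2))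
  have hmono : (m:ℝ) ^ (-((3:ℝ)/2)) ≤ 2 ^ ((3:ℝ)/2) * (n:ℝ) ^ (-((3:ℝ)/2)) := by
    have hhalf : (n:ℝ)/2 ≤ (m:ℝ) := by linarith
    have hhalf0 : (0:ℝ) < (n:ℝ)/2 := by positivity
    have h1 : ((n:ℝ)/2) ^ ((3:ℝ)/2) ≤ (m:ℝ) ^ ((3:ℝ)/2) :=
      Real.rpow_le_rpow hhalf0.le hhalf (by norm_num)
    have h2 : (m:ℝ) ^ (-((3:ℝ)/2)) ≤ ((n:ℝ)/2) ^ (-((3:ℝ)/2)) := by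
      rw [Real.rpow_neg hm0.le, Real.rpow_neg hhalf0.le]
      exact inv_anti₀ (Real.rpow_pos_of_pos hhalf0 _) h1
    have h3 : ((n:ℝ)/2) ^ (-((3:ℝ)/2)) = 2 ^ ((3:ℝ)/2) * (n:ℝ) ^ (-((3:ℝ)/2)) := by
      rw [Real.rpow_neg (by positivity), Real.div_rpow hn0.le (by norm_num : (0:ℝ) ≤ 2),
        Real.rpow_neg hn0.le]
      have hpow1 : (0:ℝ) < (n:ℝ) ^ ((3:ℝ)/2) := Real.rpow_pos_of_pos hn0 _
      have hpow2 : (0:ℝ) < (2:ℝ) ^ ((3:ℝ)/2) := Real.rpow_pos_of_pos two_pos _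
      field_simp
    linarith
  have hz : (0:ℝ) < (n:ℝ) ^ (-((3:ℝ)/2)) := Real.rpow_pos_of_pos hn0 _
  have hnum : x ≤ (B * 2 ^ ((3:ℝ)/2)) * (n:ℝ) ^ (-((3:ℝ)/2)) := by
    calc x ≤ B * (m:ℝ) ^ (-((3:ℝ)/2)) := hxB
      _ ≤ B * (2 ^ ((3:ℝ)/2) * (n:ℝ) ^ (-((3:ℝ)/2))) := by
          exact mul_le_mul_of_nonneg_left hmono hB
      _ = (B * 2 ^ ((3:ℝ)/2)) * (n:ℝ) ^ (-((3:ℝ)/2)) := by ring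
  have hden : 0 < c/2 * (n:ℝ) ^ (-((3:ℝ)/2)) := by positivity
  calc x / p n ≤ (B * 2 ^ ((3:ℝ)/2)) * (n:ℝ) ^ (-((3:ℝ)/2)) /
        (c/2 * (n:ℝ) ^ (-((3:ℝ)/2))) := by
        apply div_le_div₀ (by positivity) hnum hden hlbn
    _ = B * 2 ^ ((3:ℝ)/2) * 2 / c := by
        field_simp
    _ = B * 2 ^ ((5:ℝ)/2) / c := by
        have h22 : (2:ℝ) ^ ((5:ℝ)/2) = 2 ^ ((3:ℝ)/2) * 2 := by
          rw [show (5:ℝ)/2 = (3:ℝ)/2 + 1 by norm_num, Real.rpow_add two_pos, Real.rpow_one]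
        rw [h22]; ring

private lemma aux_conv_ratio_limit
    {p : ℕ → ℝ} {c : ℝ} (hc : 0 < c) (hp0 : ∀ n, 0 ≤ p n)
    (hpsum : HasSum p 1)
    (htail : Tendsto (fun n : ℕ => (n:ℝ) ^ ((3:ℝ)/2) * p n) atTop (nhds c))
    {q : ℕ → ℕ → ℝ} (hq0 : ∀ f m, 0 ≤ q f m)
    (hq00 : ∀ m, 1 ≤ m → q 0 m = 0)
    (hqsum : ∀ f, HasSum (q f) 1)
    (hconv : ∀ f m, q (f+1) m = ∑ k ∈ Finset.range (m+1), q f k * p (m - k))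
    {C : ℝ} (hC0 : 0 ≤ C)
    (hC : ∀ f m, 1 ≤ m → q f m ≤ C * (f:ℝ) ^ ((5:ℝ)/2) * (m:ℝ) ^ (-((3:ℝ)/2))) :
    ∀ f j : ℕ, Tendsto (fun n => q f (n - j) / p n) atTop (nhds f) := by
  obtain ⟨n₀, hn₀1, hlb⟩ := aux_tail_lb hc htail
  have hpos := aux_pos_of_lb hc hn₀1 hlb
  obtain ⟨Cp, hCp0, hub⟩ := aux_tail_ub htail
  have hKey := aux_key hc hlb hpos
  -- upgrade a ratio limit to shifted ratio limits
  have upgrade : ∀ (f : ℕ), Tendsto (fun n => q f n / p n) atTop (nhds f) →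
      ∀ j : ℕ, Tendsto (fun n => q f (n - j) / p n) atTop (nhds f) := by
    intro f hmain j
    have h1 := hmain.comp (tendsto_sub_atTop_nat j)
    have h2 := h1.mul (aux_shift_ratio hc htail hn₀1 hpos j)
    rw [mul_one] at h2
    refine h2.congr' ?_
    filter_upwards [eventually_ge_atTop (n₀ + j)] with n hn
    have hmn : n₀ ≤ n - j := le_tsub_of_add_le_right hn
    have hpm : p (n - j) ≠ 0 := (hpos _ hmn).ne'
    simp only [Function.comp]
    field_simp
  suffices hmain : ∀ f : ℕ, Tendsto (fun n => q f n / p n) atTop (nhds f) by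
    intro f j; exact upgrade f (hmain f) j
  intro f
  induction f with
  | zero =>
    rw [Nat.cast_zero]
    refine tendsto_const_nhds.congr' ?_
    filter_upwards [eventually_ge_atTop 1] with n hn
    simp [hq00 n hn]
  | succ f IH =>
    have IHall : ∀ j : ℕ, Tendsto (fun n => q f (n - j) / p n) atTop (nhds f) := upgrade f IH
    set D : ℝ := Cp * 2 ^ ((5:ℝ)/2) / c with hD
    set B2 : ℝ := C * (f:ℝ) ^ ((5:ℝ)/2) with hB2
    have hB20 : 0 ≤ B2 := by positivity
    set D2 : ℝ := B2 * 2 ^ ((5:ℝ)/2) / c with hD2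
    set g1 : ℕ → ℕ → ℝ := fun n k => if k ≤ n/2 then q f k * (p (n-k) / p n) else 0 with hg1
    set g2 : ℕ → ℕ → ℝ := fun n j => if j < n - n/2 then q f (n-j) * (p j / p n) else 0 with hg2
    have hA : Tendsto (fun n => ∑' k, g1 n k) atTop (nhds 1) := by
      have hs : Summable (fun k => D * q f k) := ((hqsum f).summable).mul_left D
      have hlim : ∀ k : ℕ, Tendsto (fun n => g1 n k) atTop (nhds (q f k)) := by
        intro k
        have h1 : Tendsto (fun n => q f k * (p (n-k) / p n)) atTop (nhds (q f k * 1)) :=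
          tendsto_const_nhds.mul (aux_shift_ratio hc htail hn₀1 hpos k)
        rw [mul_one] at h1
        refine h1.congr' ?_
        filter_upwards [eventually_ge_atTop (2*k)] with n hn
        have hk : k ≤ n/2 := by omega
        simp only [hg1, if_pos hk]
      have hbd : ∀ᶠ n in atTop, ∀ k, ‖g1 n k‖ ≤ D * q f k := by
        filter_upwards [eventually_ge_atTop (max n₀ 2)] with n hn k
        have hnn₀ : n₀ ≤ n := le_trans (le_max_left _ _) hn
        by_cases hk : k ≤ n/2
        · have hn2 : 2 ≤ n := le_trans (le_max_right _ _) hn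
          have hm1 : 1 ≤ n - k := by omega
          have hnm : (n:ℝ) ≤ 2 * ((n-k:ℕ):ℝ) := by
            have : n ≤ 2 * (n - k) := by omega
            exact_mod_cast this
          have hr : p (n-k) / p n ≤ D :=
            hKey n hn (n-k) hm1 hnm Cp (p (n-k)) hCp0.le (hp0 _) (hub _ hm1)
          have hnn : 0 ≤ q f k * (p (n-k)/p n) :=
            mul_nonneg (hq0 f k) (div_nonneg (hp0 _) (hpos n hnn₀).le)
          simp only [hg1, if_pos hk]
          rw [Real.norm_of_nonneg hnn]
          calc q f k * (p (n-k)/p n) ≤ q f k * D := mul_le_mul_of_nonneg_left hr (hq0 f k)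
            _ = D * q f k := mul_comm _ _
        · have hD0 : 0 ≤ D := by positivity
          simp only [hg1, if_neg hk, norm_zero]
          exact mul_nonneg hD0 (hq0 f k)
      have := tendsto_tsum_of_dominated_convergence hs hlim hbd
      rwa [(hqsum f).tsum_eq] at this
    have hB : Tendsto (fun n => ∑' j, g2 n j) atTop (nhds f) := by
      have hs : Summable (fun j => D2 * p j) := (hpsum.summable).mul_left D2
      have hlim : ∀ j : ℕ, Tendsto (fun n => g2 n j) atTop (nhds ((f:ℝ) * p j)) := by
        intro j
        have h1 : Tendsto (fun n => (q f (n-j) / p n) * p j) atTop (nhds ((f:ℝ) * p j)) :=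
          (IHall j).mul_const (p j)
        refine h1.congr' ?_
        filter_upwards [eventually_ge_atTop (2*(j+1))] with n hn
        have hj : j < n - n/2 := by omega
        simp only [hg2, if_pos hj]
        ring
      have hbd : ∀ᶠ n in atTop, ∀ j, ‖g2 n j‖ ≤ D2 * p j := by
        filter_upwards [eventually_ge_atTop (max n₀ 2)] with n hn j
        have hnn₀ : n₀ ≤ n := le_trans (le_max_left _ _) hn
        by_cases hj : j < n - n/2
        · have hn2 : 2 ≤ n := le_trans (le_max_right _ _) hn
          have hm1 : 1 ≤ n - j := by omega
          have hnm : (n:ℝ) ≤ 2 * ((n-j:ℕ):ℝ) := by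
            have : n ≤ 2 * (n - j) := by omega
            exact_mod_cast this
          have hr : q f (n-j) / p n ≤ B2 * 2 ^ ((5:ℝ)/2) / c := by
            refine hKey n hn (n-j) hm1 hnm B2 (q f (n-j)) hB20 (hq0 _ _) ?_
            have := hC f (n-j) hm1
            rw [hB2]
            exact this
          have hnn : 0 ≤ q f (n-j) * (p j/p n) :=
            mul_nonneg (hq0 _ _) (div_nonneg (hp0 _) (hpos n hnn₀).le)
          simp only [hg2, if_pos hj]
          rw [Real.norm_of_nonneg hnn]
          calc q f (n-j) * (p j/p n) = (q f (n-j) / p n) * p j := by ring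
            _ ≤ (B2 * 2 ^ ((5:ℝ)/2) / c) * p j := mul_le_mul_of_nonneg_right hr (hp0 j)
            _ = D2 * p j := by rw [hD2]
        · have hD20 : 0 ≤ D2 := by positivity
          simp only [hg2, if_neg hj, norm_zero]
          exact mul_nonneg hD20 (hp0 j)
      have := tendsto_tsum_of_dominated_convergence hs hlim hbd
      rwa [(hpsum.mul_left (f:ℝ)).tsum_eq, mul_one] at this
    have hEq : ∀ n : ℕ, q (f+1) n / p n = (∑' k, g1 n k) + (∑' j, g2 n j) := by
      intro n
      have hsplit : q (f+1) n = (∑ k ∈ range (n/2+1), q f k * p (n-k))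
          + (∑ j ∈ range (n - n/2), q f (n-j) * p j) := by
        rw [hconv f n, range_eq_Ico,
          ← Finset.sum_Ico_consecutive (fun k => q f k * p (n-k))
            (by omega : 0 ≤ n/2+1) (by omega : n/2+1 ≤ n+1), ← range_eq_Ico]
        congr 1
        refine Finset.sum_nbij' (fun k => n - k) (fun j => n - j) ?_ ?_ ?_ ?_ ?_
        · intro k hk; simp only [Finset.mem_Ico] at hk; simp only [Finset.mem_range]; omega
        · intro j hj; simp only [Finset.mem_range] at hj; simp only [Finset.mem_Ico]; omega
        · intro k hk; simp only [Finset.mem_Ico] at hk; show n - (n - k) = k; omega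
        · intro j hj; simp only [Finset.mem_range] at hj; show n - (n - j) = j; omega
        · intro k hk; simp only [Finset.mem_Ico] at hk
          have : n - (n - k) = k := by omega
          rw [this]
      have ht1 : ∑' k, g1 n k = ∑ k ∈ range (n/2+1), q f k * (p (n-k) / p n) := by
        rw [tsum_eq_sum (s := range (n/2+1))
          (fun k hk => if_neg (by simp only [Finset.mem_range] at hk; omega))]
        exact Finset.sum_congr rfl
          (fun k hk => if_pos (by simp only [Finset.mem_range] at hk; omega))
      have ht2 : ∑' j, g2 n j = ∑ j ∈ range (n - n/2), q f (n-j) * (p j / p n) := by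
        rw [tsum_eq_sum (s := range (n - n/2))
          (fun j hj => if_neg (by simp only [Finset.mem_range] at hj; omega))]
        exact Finset.sum_congr rfl
          (fun j hj => if_pos (by simp only [Finset.mem_range] at hj; omega))
      rw [hsplit, add_div, ht1, ht2]
      congr 1
      · rw [Finset.sum_div]
        exact Finset.sum_congr rfl (fun k _ => mul_div_assoc _ _ _)
      · rw [Finset.sum_div]
        refine Finset.sum_congr rfl (fun j _ => ?_)
        ring
    have hfin := hA.add hB
    have hfin2 : Tendsto (fun n => q (f+1) n / p n) atTop (nhds (1 + (f:ℝ))) :=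
      hfin.congr (fun n => (hEq n).symm)
    have hcast : (1:ℝ) + (f:ℝ) = ((f+1:ℕ):ℝ) := by push_cast; ring
    rwa [hcast] at hfin2

private lemma aux_final
    {p : ℕ → ℝ} {c : ℝ} (hc : 0 < c) (hp0 : ∀ n, 0 ≤ p n)
    (hpsum : HasSum p 1)
    (htail : Tendsto (fun n : ℕ => (n:ℝ) ^ ((3:ℝ)/2) * p n) atTop (nhds c))
    {q : ℕ → ℕ → ℝ} (hq0 : ∀ f m, 0 ≤ q f m)
    (hq00 : ∀ m, 1 ≤ m → q 0 m = 0)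
    (hqsum : ∀ f, HasSum (q f) 1)
    (hconv : ∀ f m, q (f+1) m = ∑ k ∈ Finset.range (m+1), q f k * p (m - k))
    {C : ℝ} (hC0 : 0 ≤ C)
    (hC : ∀ f m, 1 ≤ m → q f m ≤ C * (f:ℝ) ^ ((5:ℝ)/2) * (m:ℝ) ^ (-((3:ℝ)/2)))
    {w : ℕ × ℕ → ℝ} (hw0 : ∀ fh, 0 ≤ w fh)
    {t : ℝ} (ht : 0 < t)
    (hwexp : Summable (fun fh : ℕ × ℕ => w fh * Real.exp (t * ((fh.1:ℝ) + (fh.2:ℝ)))))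
    {Pn : ℕ → ℝ}
    (hdecomp : ∀ n, Pn n =
      ∑' fh : ℕ × ℕ, w fh * (if fh.2 ≤ n then q fh.1 (n - fh.2) else 0))
    {EF : ℝ} (hEF : HasSum (fun fh : ℕ × ℕ => w fh * (fh.1:ℝ)) EF) :
    Tendsto (fun n => Pn n / p n) atTop (nhds EF) := by
  obtain ⟨n₀, hn₀1, hlb⟩ := aux_tail_lb hc htail
  have hpos := aux_pos_of_lb hc hn₀1 hlb
  have hKey := aux_key hc hlb hpos
  have hratios := aux_conv_ratio_limit hc hp0 hpsum htail hq0 hq00 hqsum hconv hC0 hC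
  have hqle1 : ∀ f m, q f m ≤ 1 := fun f m => le_hasSum (hqsum f) m (fun b _ => hq0 f b)
  set r : ℕ → (ℕ × ℕ) → ℝ :=
    fun n fh => w fh * (if fh.2 ≤ n then q fh.1 (n - fh.2) else 0) / p n with hr
  have hPn : ∀ n, Pn n / p n = ∑' fh, r n fh := by
    intro n
    rw [hdecomp n, ← tsum_div_const]
  -- the dominating function
  set g : ℕ × ℕ → ℝ := fun fh =>
    w fh * (C * (fh.1:ℝ) ^ ((5:ℝ)/2) * 2 ^ ((5:ℝ)/2) / c
      + (2*(fh.2:ℝ)+2) ^ ((3:ℝ)/2) * 2 / c) with hg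
  have hgsum : Summable g := by
    set K : ℝ := 2 ^ ((5:ℝ)/2) / c * C * (1 + 27 / t ^ 3)
      + 2 / c * 2 ^ ((3:ℝ)/2) * ((1 + 27 / t ^ 3) * Real.exp t) with hK
    refine Summable.of_nonneg_of_le
      (fun fh => mul_nonneg (hw0 fh) (by positivity))
      (fun fh => ?_) (hwexp.mul_left K)
    have hE1 : (fh.1:ℝ) ^ ((5:ℝ)/2) ≤ (1 + 27 / t ^ 3) * Real.exp (t * fh.1) :=
      aux_rpow_le_exp ht (Nat.cast_nonneg fh.1) (by norm_num) (by norm_num)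
    have hmono1 : Real.exp (t * (fh.1:ℝ)) ≤ Real.exp (t * ((fh.1:ℝ) + (fh.2:ℝ))) := by
      apply Real.exp_le_exp.mpr
      nlinarith [ht.le, Nat.cast_nonneg (α := ℝ) fh.2]
    have hmono2 : Real.exp (t * (fh.2:ℝ)) ≤ Real.exp (t * ((fh.1:ℝ) + (fh.2:ℝ))) := by
      apply Real.exp_le_exp.mpr
      nlinarith [ht.le, Nat.cast_nonneg (α := ℝ) fh.1]
    have hA1 : C * (fh.1:ℝ) ^ ((5:ℝ)/2) * 2 ^ ((5:ℝ)/2) / c ≤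
        (2 ^ ((5:ℝ)/2) / c * C * (1 + 27 / t ^ 3)) * Real.exp (t * ((fh.1:ℝ) + (fh.2:ℝ))) := by
      calc C * (fh.1:ℝ) ^ ((5:ℝ)/2) * 2 ^ ((5:ℝ)/2) / c
          = (2 ^ ((5:ℝ)/2) / c * C) * (fh.1:ℝ) ^ ((5:ℝ)/2) := by ring
        _ ≤ (2 ^ ((5:ℝ)/2) / c * C) * ((1 + 27 / t ^ 3) * Real.exp (t * fh.1)) :=
            mul_le_mul_of_nonneg_left hE1 (by positivity)
        _ = (2 ^ ((5:ℝ)/2) / c * C * (1 + 27 / t ^ 3)) * Real.exp (t * fh.1) := by ring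
        _ ≤ _ := mul_le_mul_of_nonneg_left hmono1 (by positivity)
    have hE3 : ((fh.2:ℝ)+1) ^ ((3:ℝ)/2) ≤ (1 + 27 / t ^ 3) * Real.exp (t*((fh.2:ℝ)+1)) :=
      aux_rpow_le_exp ht (by positivity) (by norm_num) (by norm_num)
    have hh32 : (2*(fh.2:ℝ)+2) ^ ((3:ℝ)/2) ≤
        2 ^ ((3:ℝ)/2) * ((1 + 27 / t ^ 3) * Real.exp t
          * Real.exp (t * ((fh.1:ℝ) + (fh.2:ℝ)))) := by
      have e1 : (2*(fh.2:ℝ)+2) = 2 * ((fh.2:ℝ)+1) := by ring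
      rw [e1, Real.mul_rpow (by norm_num) (by positivity)]
      refine mul_le_mul_of_nonneg_left ?_ (by positivity)
      calc ((fh.2:ℝ)+1) ^ ((3:ℝ)/2) ≤ (1 + 27 / t ^ 3) * Real.exp (t*((fh.2:ℝ)+1)) := hE3
        _ = (1 + 27 / t ^ 3) * Real.exp t * Real.exp (t*(fh.2:ℝ)) := by
            rw [mul_assoc, ← Real.exp_add]; ring_nf
        _ ≤ _ := mul_le_mul_of_nonneg_left hmono2 (by positivity)
    have hA2 : (2*(fh.2:ℝ)+2) ^ ((3:ℝ)/2) * 2 / c ≤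
        (2 / c * 2 ^ ((3:ℝ)/2) * ((1 + 27 / t ^ 3) * Real.exp t))
          * Real.exp (t * ((fh.1:ℝ) + (fh.2:ℝ))) := by
      calc (2*(fh.2:ℝ)+2) ^ ((3:ℝ)/2) * 2 / c = 2/c * (2*(fh.2:ℝ)+2) ^ ((3:ℝ)/2) := by ring
        _ ≤ 2/c * (2 ^ ((3:ℝ)/2) * ((1 + 27 / t ^ 3) * Real.exp t
              * Real.exp (t * ((fh.1:ℝ) + (fh.2:ℝ))))) :=
            mul_le_mul_of_nonneg_left hh32 (by positivity)
        _ = _ := by ring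
    have hS : C * (fh.1:ℝ) ^ ((5:ℝ)/2) * 2 ^ ((5:ℝ)/2) / c
        + (2*(fh.2:ℝ)+2) ^ ((3:ℝ)/2) * 2 / c
        ≤ K * Real.exp (t * ((fh.1:ℝ) + (fh.2:ℝ))) := by
      rw [hK, add_mul]; exact add_le_add hA1 hA2
    simp only [hg]
    calc w fh * (C * (fh.1:ℝ) ^ ((5:ℝ)/2) * 2 ^ ((5:ℝ)/2) / c
          + (2*(fh.2:ℝ)+2) ^ ((3:ℝ)/2) * 2 / c)
        ≤ w fh * (K * Real.exp (t * ((fh.1:ℝ) + (fh.2:ℝ)))) :=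
          mul_le_mul_of_nonneg_left hS (hw0 fh)
      _ = K * (w fh * Real.exp (t * ((fh.1:ℝ) + (fh.2:ℝ)))) := by ring
  have hlim : ∀ fh : ℕ × ℕ, Tendsto (fun n => r n fh) atTop (nhds (w fh * fh.1)) := by
    intro fh
    have h1 : Tendsto (fun n => w fh * (q fh.1 (n - fh.2) / p n)) atTop
        (nhds (w fh * fh.1)) := tendsto_const_nhds.mul (hratios fh.1 fh.2)
    refine h1.congr' ?_
    filter_upwards [eventually_ge_atTop fh.2] with n hn
    simp only [hr, if_pos hn]
    ring
  have hbd : ∀ᶠ n in atTop, ∀ fh, ‖r n fh‖ ≤ g fh := by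
    filter_upwards [eventually_ge_atTop (max n₀ 2)] with n hn fh
    have hnn₀ : n₀ ≤ n := le_trans (le_max_left _ _) hn
    have hn2 : 2 ≤ n := le_trans (le_max_right _ _) hn
    have hn0 : (0:ℝ) < (n:ℝ) := by exact_mod_cast lt_of_lt_of_le two_pos hn2
    have hpn : 0 < p n := hpos n hnn₀
    have hif0 : 0 ≤ (if fh.2 ≤ n then q fh.1 (n - fh.2) else 0) := by
      split
      · exact hq0 _ _
      · exact le_refl 0
    have hrnn : 0 ≤ r n fh := div_nonneg (mul_nonneg (hw0 _) hif0) hpn.le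
    rw [Real.norm_of_nonneg hrnn]
    have hg2nn : (0:ℝ) ≤ (2*(fh.2:ℝ)+2) ^ ((3:ℝ)/2) * 2 / c := by positivity
    have hg1nn : (0:ℝ) ≤ C * (fh.1:ℝ) ^ ((5:ℝ)/2) * 2 ^ ((5:ℝ)/2) / c := by positivity
    by_cases hcase : 2*fh.2 + 2 ≤ n
    · have hfh2 : fh.2 ≤ n := by omega
      have hm1 : 1 ≤ n - fh.2 := by omega
      have hnm : (n:ℝ) ≤ 2*((n - fh.2 : ℕ):ℝ) := by
        exact_mod_cast (by omega : n ≤ 2*(n - fh.2))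
      have hdivb : q fh.1 (n - fh.2) / p n ≤ C * (fh.1:ℝ) ^ ((5:ℝ)/2) * 2 ^ ((5:ℝ)/2) / c := by
        have h := hKey n hn (n - fh.2) hm1 hnm (C * (fh.1:ℝ) ^ ((5:ℝ)/2)) (q fh.1 (n - fh.2))
          (by positivity) (hq0 _ _) (hC fh.1 (n - fh.2) hm1)
        exact h
      simp only [hr, if_pos hfh2]
      calc w fh * q fh.1 (n - fh.2) / p n = w fh * (q fh.1 (n - fh.2) / p n) := by ring
        _ ≤ w fh * (C * (fh.1:ℝ) ^ ((5:ℝ)/2) * 2 ^ ((5:ℝ)/2) / c) :=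
            mul_le_mul_of_nonneg_left hdivb (hw0 fh)
        _ ≤ g fh := by
            simp only [hg]
            refine mul_le_mul_of_nonneg_left ?_ (hw0 fh)
            linarith
    · push_neg at hcase
      have hb1 : (if fh.2 ≤ n then q fh.1 (n - fh.2) else 0) ≤ 1 := by
        split
        · exact hqle1 _ _
        · norm_num
      have hinv : 1 / p n ≤ 2/c * (n:ℝ) ^ ((3:ℝ)/2) := by
        have hlbn := hlb n hnn₀
        have hz : 0 < c/2 * (n:ℝ) ^ (-((3:ℝ)/2)) := by positivity
        have h1 := one_div_le_one_div_of_le hz hlbn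
        have heq : 1/(c/2 * (n:ℝ) ^ (-((3:ℝ)/2))) = 2/c * (n:ℝ) ^ ((3:ℝ)/2) := by
          rw [Real.rpow_neg hn0.le]
          have hne : ((n:ℝ) ^ ((3:ℝ)/2)) ≠ 0 := (Real.rpow_pos_of_pos hn0 _).ne'
          field_simp
        rw [heq] at h1
        exact h1
      have hn32 : (n:ℝ) ^ ((3:ℝ)/2) ≤ (2*(fh.2:ℝ)+2) ^ ((3:ℝ)/2) := by
        refine Real.rpow_le_rpow hn0.le ?_ (by norm_num)
        have : (n:ℝ) ≤ ((2*fh.2+2 : ℕ):ℝ) := by exact_mod_cast hcase.le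
        push_cast at this
        linarith
      have hstep : (if fh.2 ≤ n then q fh.1 (n - fh.2) else 0) / p n ≤
          (2*(fh.2:ℝ)+2) ^ ((3:ℝ)/2) * 2 / c := by
        calc (if fh.2 ≤ n then q fh.1 (n - fh.2) else 0) / p n ≤ 1 / p n :=
              (div_le_div_iff_of_pos_right hpn).mpr hb1
          _ ≤ 2/c * (n:ℝ) ^ ((3:ℝ)/2) := hinv
          _ ≤ 2/c * (2*(fh.2:ℝ)+2) ^ ((3:ℝ)/2) :=
              mul_le_mul_of_nonneg_left hn32 (by positivity)
          _ = (2*(fh.2:ℝ)+2) ^ ((3:ℝ)/2) * 2 / c := by ring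
      simp only [hr]
      calc w fh * (if fh.2 ≤ n then q fh.1 (n - fh.2) else 0) / p n
          = w fh * ((if fh.2 ≤ n then q fh.1 (n - fh.2) else 0) / p n) := by ring
        _ ≤ w fh * ((2*(fh.2:ℝ)+2) ^ ((3:ℝ)/2) * 2 / c) :=
            mul_le_mul_of_nonneg_left hstep (hw0 fh)
        _ ≤ g fh := by
            simp only [hg]
            refine mul_le_mul_of_nonneg_left ?_ (hw0 fh)
            linarith
  have hT := tendsto_tsum_of_dominated_convergence hgsum hlim hbd
  rw [hEF.tsum_eq] at hT
  exact hT.congr (fun n => (hPn n).symm)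

private lemma aux_hasSum_fiber {Ω : Type*} [MeasurableSpace Ω] (P : Measure Ω)
    [IsProbabilityMeasure P] {α : Type*} [MeasurableSpace α] [MeasurableSingletonClass α]
    [Countable α] {g : Ω → α} (hg : Measurable g) :
    HasSum (fun a => (P (g ⁻¹' {a})).toReal) 1 := by
  have hmeas : ∀ a : α, MeasurableSet (g ⁻¹' {a}) := fun a => hg (measurableSet_singleton a)
  have hdisj : Pairwise (Function.onFun Disjoint fun a : α => g ⁻¹' {a}) := by
    intro a b hab
    simp only [Function.onFun]
    rw [Set.disjoint_left]
    rintro ω h1 h2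
    simp only [Set.mem_preimage, Set.mem_singleton_iff] at h1 h2
    exact hab (h1 ▸ h2 ▸ rfl)
  have h1 : ∑' a, P (g ⁻¹' {a}) = 1 := by
    rw [← measure_iUnion hdisj hmeas]
    have : (⋃ a, g ⁻¹' {a}) = Set.univ := by
      ext ω; simp
    rw [this, measure_univ]
  have hfin : ∀ a, P (g ⁻¹' {a}) ≠ ⊤ := fun a => measure_ne_top P _
  have hsummable : Summable (fun a => (P (g ⁻¹' {a})).toReal) :=
    ENNReal.summable_toReal (by rw [h1]; exact ENNReal.one_ne_top)
  rw [hsummable.hasSum_iff, ← ENNReal.tsum_toReal_eq hfin, h1, ENNReal.toReal_one]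

private lemma aux_conv {Ω : Type*} [MeasurableSpace Ω] (P : Measure Ω)
    [IsProbabilityMeasure P] (X : ℕ → Ω → ℕ) (hXm : ∀ i, Measurable (X i))
    (hXindep : iIndepFun X P)
    (hXid : ∀ i, IdentDistrib (X i) (X 0) P P) (f m : ℕ) :
    (P {ω | ∑ i ∈ Finset.range (f+1), X i ω = m}).toReal
      = ∑ k ∈ Finset.range (m+1), (P {ω | ∑ i ∈ Finset.range f, X i ω = k}).toReal
          * (P {ω | X 0 ω = m - k}).toReal := by
  have hSm : ∀ g : ℕ, Measurable (fun ω => ∑ i ∈ Finset.range g, X i ω) :=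
    fun g => Finset.measurable_sum _ (fun i _ => hXm i)
  set E : ℕ → Set Ω := fun k =>
    {ω | ∑ i ∈ Finset.range f, X i ω = k} ∩ {ω | X f ω = m - k} with hE
  have hEmeas : ∀ k ∈ Finset.range (m+1), MeasurableSet (E k) := by
    intro k _
    exact ((hSm f (measurableSet_singleton k))).inter ((hXm f) (measurableSet_singleton (m-k)))
  have hset : {ω | ∑ i ∈ Finset.range (f+1), X i ω = m} = ⋃ k ∈ Finset.range (m+1), E k := by
    ext ω
    simp only [Set.mem_setOf_eq, Set.mem_iUnion, Finset.mem_range, E, Set.mem_inter_iff,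
      exists_prop]
    rw [Finset.sum_range_succ]
    constructor
    · intro hsum
      exact ⟨∑ i ∈ Finset.range f, X i ω, by omega, rfl, by omega⟩
    · rintro ⟨k, hk, h1, h2⟩
      omega
  have hdisj : Set.PairwiseDisjoint (↑(Finset.range (m+1))) E := by
    intro a _ b _ hab
    simp only [Function.onFun, E]
    rw [Set.disjoint_left]
    rintro ω ⟨h1, _⟩ ⟨h3, _⟩
    simp only [Set.mem_setOf_eq] at h1 h3
    exact hab (h1 ▸ h3 ▸ rfl)
  have hmeasure : P {ω | ∑ i ∈ Finset.range (f+1), X i ω = m}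
      = ∑ k ∈ Finset.range (m+1), P (E k) := by
    rw [hset, measure_biUnion_finset hdisj hEmeas]
  have hfactor : ∀ k, P (E k)
      = P {ω | ∑ i ∈ Finset.range f, X i ω = k} * P {ω | X 0 ω = m - k} := by
    intro k
    have hind : IndepFun (∑ i ∈ Finset.range f, X i) (X f) P :=
      hXindep.indepFun_finsetSum_of_notMem hXm (Finset.notMem_range_self)
    have happ : (∑ i ∈ Finset.range f, X i) = (fun ω => ∑ i ∈ Finset.range f, X i ω) := by
      funext ω; simp [Finset.sum_apply]
    have h1 := hind.measure_inter_preimage_eq_mul {k} {m-k}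
      (measurableSet_singleton k) (measurableSet_singleton (m-k))
    rw [happ] at h1
    have h2 : P (X f ⁻¹' {m-k}) = P (X 0 ⁻¹' {m-k}) :=
      (hXid f).measure_mem_eq (measurableSet_singleton (m-k))
    have e1 : ((fun ω => ∑ i ∈ Finset.range f, X i ω) ⁻¹' {k}
        ∩ X f ⁻¹' {m-k}) = E k := rfl
    have e2 : ((fun ω => ∑ i ∈ Finset.range f, X i ω) ⁻¹' {k})
        = {ω | ∑ i ∈ Finset.range f, X i ω = k} := rfl
    have e3 : (X 0 ⁻¹' {m-k}) = {ω | X 0 ω = m - k} := rfl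
    rw [e1, e2] at h1
    rw [h1, h2, e3]
  rw [hmeasure, ENNReal.toReal_sum (fun k _ => measure_ne_top P _)]
  refine Finset.sum_congr rfl (fun k _ => ?_)
  rw [hfactor k, ENNReal.toReal_mul]

private lemma aux_rpow_anti {a b : ℝ} (ha : 0 < a) (hab : a ≤ b) :
    b ^ (-((3:ℝ)/2)) ≤ a ^ (-((3:ℝ)/2)) := by
  have hb : 0 < b := lt_of_lt_of_le ha hab
  rw [Real.rpow_neg ha.le, Real.rpow_neg hb.le]
  exact inv_anti₀ (Real.rpow_pos_of_pos ha _) (Real.rpow_le_rpow ha.le hab (by norm_num))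

private lemma aux_maxbound {Ω : Type*} [MeasurableSpace Ω] (P : Measure Ω)
    [IsProbabilityMeasure P] (X : ℕ → Ω → ℕ) (hXm : ∀ i, Measurable (X i))
    (hXindep : iIndepFun X P)
    (hXid : ∀ i, IdentDistrib (X i) (X 0) P P)
    {Cp : ℝ} (hCp : 0 < Cp)
    (hub : ∀ n : ℕ, 1 ≤ n → (P {ω | X 0 ω = n}).toReal ≤ Cp * (n:ℝ) ^ (-((3:ℝ)/2)))
    (f m : ℕ) (hm : 1 ≤ m) :
    (P {ω | ∑ i ∈ Finset.range f, X i ω = m}).toReal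
      ≤ Cp * (f:ℝ) ^ ((5:ℝ)/2) * (m:ℝ) ^ (-((3:ℝ)/2)) := by
  have hSm : ∀ (s : Finset ℕ), Measurable (fun ω => ∑ i ∈ s, X i ω) :=
    fun s => Finset.measurable_sum _ (fun i _ => hXm i)
  rcases Nat.eq_zero_or_pos f with hf | hf
  · subst hf
    have : {ω | ∑ i ∈ Finset.range 0, X i ω = m} = (∅ : Set Ω) := by
      ext ω; simp; omega
    rw [this, measure_empty]
    simp only [ENNReal.toReal_zero, Nat.cast_zero]
    rw [Real.zero_rpow (by norm_num : ((5:ℝ)/2) ≠ 0)]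
    simp
  -- f ≥ 1
  obtain ⟨T, hT1, hTf, hTm⟩ : ∃ T : ℕ, 1 ≤ T ∧ f * T ≤ m + f - 1 ∧ m ≤ f * T := by
    refine ⟨(m + f - 1)/f, ?_, ?_, ?_⟩
    · rw [Nat.one_le_div_iff hf]; omega
    · calc f * ((m + f - 1)/f) = (m + f - 1)/f * f := mul_comm _ _
        _ ≤ m + f - 1 := Nat.div_mul_le_self _ _
    · have h := Nat.div_add_mod (m + f - 1) f
      have h2 := Nat.mod_lt (m + f - 1) hf
      omega
  -- inclusion into union over the index achieving a large value
  have hincl : {ω | ∑ i ∈ Finset.range f, X i ω = m} ⊆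
      ⋃ i ∈ Finset.range f, ({ω | T ≤ X i ω} ∩ {ω | ∑ i ∈ Finset.range f, X i ω = m}) := by
    intro ω hω
    simp only [Set.mem_setOf_eq] at hω
    simp only [Set.mem_iUnion, Set.mem_inter_iff, Set.mem_setOf_eq, Finset.mem_range,
      exists_prop]
    by_contra hcon
    push_neg at hcon
    have hlt : ∀ i ∈ Finset.range f, X i ω ≤ T - 1 := by
      intro i hi
      simp only [Finset.mem_range] at hi
      have hx : ¬ T ≤ X i ω := fun hTle => (hcon i hi hTle) hω
      omega
    have hsum_le : ∑ i ∈ Finset.range f, X i ω ≤ ∑ _i ∈ Finset.range f, (T-1) :=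
      Finset.sum_le_sum hlt
    rw [Finset.sum_const, Finset.card_range, smul_eq_mul] at hsum_le
    obtain ⟨t, rfl⟩ : ∃ t, T = t + 1 := ⟨T - 1, by omega⟩
    rw [Nat.mul_succ] at hTm hTf
    simp only [Nat.add_sub_cancel] at hsum_le
    omega
  have hsub : P {ω | ∑ i ∈ Finset.range f, X i ω = m} ≤
      ∑ i ∈ Finset.range f, P ({ω | T ≤ X i ω} ∩ {ω | ∑ i ∈ Finset.range f, X i ω = m}) :=
    le_trans (measure_mono hincl) (measure_biUnion_finset_le _ _)
  -- bound each term
  have hterm : ∀ i ∈ Finset.range f,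
      (P ({ω | T ≤ X i ω} ∩ {ω | ∑ i ∈ Finset.range f, X i ω = m})).toReal
        ≤ Cp * (T:ℝ) ^ (-((3:ℝ)/2)) := by
    intro i hi
    set R : ℕ → Set Ω := fun j => {ω | ∑ l ∈ (Finset.range f).erase i, X l ω = j} with hR
    have hRmeas : ∀ j, MeasurableSet (R j) := fun j => (hSm _) (measurableSet_singleton j)
    have hEk : ({ω | T ≤ X i ω} ∩ {ω | ∑ i ∈ Finset.range f, X i ω = m}) =
        ⋃ k ∈ Finset.Icc T m, ({ω | X i ω = k} ∩ R (m - k)) := by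
      ext ω
      simp only [Set.mem_inter_iff, Set.mem_setOf_eq, Set.mem_iUnion, Finset.mem_Icc,
        exists_prop, R]
      have hsplit : ∑ l ∈ Finset.range f, X l ω
          = X i ω + ∑ l ∈ (Finset.range f).erase i, X l ω :=
        (Finset.add_sum_erase _ _ hi).symm
      constructor
      · rintro ⟨h1, h2⟩
        exact ⟨X i ω, ⟨h1, by omega⟩, rfl, by omega⟩
      · rintro ⟨k, ⟨hk1, hk2⟩, h1, h2⟩
        constructor
        · omega
        · omega
    have hdisj : Set.PairwiseDisjoint (↑(Finset.Icc T m))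
        (fun k => ({ω | X i ω = k} ∩ R (m - k))) := by
      intro a _ b _ hab
      simp only [Function.onFun]
      rw [Set.disjoint_left]
      rintro ω ⟨h1, _⟩ ⟨h3, _⟩
      simp only [Set.mem_setOf_eq] at h1 h3
      exact hab (h1 ▸ h3 ▸ rfl)
    have hkmeas : ∀ k ∈ Finset.Icc T m, MeasurableSet ({ω | X i ω = k} ∩ R (m - k)) :=
      fun k _ => ((hXm i) (measurableSet_singleton k)).inter (hRmeas _)
    have hmeasure : P ({ω | T ≤ X i ω} ∩ {ω | ∑ i ∈ Finset.range f, X i ω = m})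
        = ∑ k ∈ Finset.Icc T m, P ({ω | X i ω = k} ∩ R (m - k)) := by
      rw [hEk, measure_biUnion_finset hdisj hkmeas]
    have hfactor : ∀ k, P ({ω | X i ω = k} ∩ R (m - k))
        = P {ω | X i ω = k} * P (R (m - k)) := by
      intro k
      have hind : IndepFun (∑ l ∈ (Finset.range f).erase i, X l) (X i) P :=
        hXindep.indepFun_finsetSum_of_notMem hXm (Finset.notMem_erase i _)
      have hind' := hind.symm
      have happ : (∑ l ∈ (Finset.range f).erase i, X l)
          = (fun ω => ∑ l ∈ (Finset.range f).erase i, X l ω) := by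
        funext ω; simp [Finset.sum_apply]
      have h1 := hind'.measure_inter_preimage_eq_mul {k} {m-k}
        (measurableSet_singleton k) (measurableSet_singleton (m-k))
      rw [happ] at h1
      exact h1
    -- sum of rest-measures bounded by 1
    have hrest : ∑ k ∈ Finset.Icc T m, P (R (m - k)) ≤ 1 := by
      have hdisjR : Set.PairwiseDisjoint (↑(Finset.Icc T m)) (fun k => R (m - k)) := by
        intro a ha b hb hab
        simp only [Finset.coe_Icc, Set.mem_Icc] at ha hb
        simp only [Function.onFun]
        rw [Set.disjoint_left]
        rintro ω h1 h2
        simp only [R, Set.mem_setOf_eq] at h1 h2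
        exact hab (by omega)
      rw [← measure_biUnion_finset hdisjR (fun k _ => hRmeas _)]
      exact le_trans (measure_mono (Set.subset_univ _)) (le_of_eq measure_univ)
    -- single-probability bound
    have hone : ∀ k ∈ Finset.Icc T m, (P {ω | X i ω = k}).toReal ≤ Cp * (T:ℝ) ^ (-((3:ℝ)/2)) := by
      intro k hk
      simp only [Finset.mem_Icc] at hk
      have hk1 : 1 ≤ k := le_trans hT1 hk.1
      have hid : P {ω | X i ω = k} = P {ω | X 0 ω = k} :=
        (hXid i).measure_mem_eq (measurableSet_singleton k)
      rw [hid]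
      calc (P {ω | X 0 ω = k}).toReal ≤ Cp * (k:ℝ) ^ (-((3:ℝ)/2)) := hub k hk1
        _ ≤ Cp * (T:ℝ) ^ (-((3:ℝ)/2)) := by
            refine mul_le_mul_of_nonneg_left ?_ hCp.le
            exact aux_rpow_anti (by exact_mod_cast hT1) (by exact_mod_cast hk.1)
    -- combine
    rw [hmeasure, ENNReal.toReal_sum (fun k _ => measure_ne_top P _)]
    have hrestR : ∑ k ∈ Finset.Icc T m, (P (R (m - k))).toReal ≤ 1 := by
      rw [← ENNReal.toReal_sum (fun k _ => measure_ne_top P _)]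
      exact ENNReal.toReal_le_of_le_ofReal one_pos.le (by simpa using hrest)
    calc ∑ k ∈ Finset.Icc T m, (P ({ω | X i ω = k} ∩ R (m - k))).toReal
        ≤ ∑ k ∈ Finset.Icc T m, (Cp * (T:ℝ) ^ (-((3:ℝ)/2))) * (P (R (m - k))).toReal := by
          refine Finset.sum_le_sum (fun k hk => ?_)
          rw [hfactor k, ENNReal.toReal_mul]
          exact mul_le_mul_of_nonneg_right (hone k hk) ENNReal.toReal_nonneg
      _ = (Cp * (T:ℝ) ^ (-((3:ℝ)/2))) * ∑ k ∈ Finset.Icc T m, (P (R (m - k))).toReal := by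
          rw [Finset.mul_sum]
      _ ≤ (Cp * (T:ℝ) ^ (-((3:ℝ)/2))) * 1 := by
          refine mul_le_mul_of_nonneg_left hrestR (by positivity)
      _ = Cp * (T:ℝ) ^ (-((3:ℝ)/2)) := mul_one _
  -- total
  have htot : (P {ω | ∑ i ∈ Finset.range f, X i ω = m}).toReal
      ≤ (f:ℝ) * (Cp * (T:ℝ) ^ (-((3:ℝ)/2))) := by
    have h1 : (P {ω | ∑ i ∈ Finset.range f, X i ω = m}).toReal ≤
        (∑ i ∈ Finset.range f,
          P ({ω | T ≤ X i ω} ∩ {ω | ∑ i ∈ Finset.range f, X i ω = m})).toReal := by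
      refine ENNReal.toReal_mono ?_ hsub
      exact (ENNReal.sum_lt_top.mpr (fun i _ => measure_lt_top P _)).ne
    rw [ENNReal.toReal_sum (fun i _ => measure_ne_top P _)] at h1
    calc (P {ω | ∑ i ∈ Finset.range f, X i ω = m}).toReal
        ≤ ∑ i ∈ Finset.range f,
          (P ({ω | T ≤ X i ω} ∩ {ω | ∑ i ∈ Finset.range f, X i ω = m})).toReal := h1
      _ ≤ ∑ _i ∈ Finset.range f, (Cp * (T:ℝ) ^ (-((3:ℝ)/2))) := Finset.sum_le_sum hterm
      _ = (f:ℝ) * (Cp * (T:ℝ) ^ (-((3:ℝ)/2))) := by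
          rw [Finset.sum_const, Finset.card_range, nsmul_eq_mul]
  -- final rpow arithmetic : f * Cp * T^{-3/2} ≤ Cp f^{5/2} m^{-3/2}
  have hf0 : (0:ℝ) < (f:ℝ) := by exact_mod_cast hf
  have hm0 : (0:ℝ) < (m:ℝ) := by exact_mod_cast hm
  have hT0 : (0:ℝ) < (T:ℝ) := by exact_mod_cast hT1
  have hTge : (m:ℝ) / (f:ℝ) ≤ (T:ℝ) := by
    rw [div_le_iff₀ hf0]
    have : (m:ℝ) ≤ (f:ℝ) * (T:ℝ) := by exact_mod_cast hTm
    linarith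
  have hmf0 : (0:ℝ) < (m:ℝ)/(f:ℝ) := by positivity
  have hTanti : (T:ℝ) ^ (-((3:ℝ)/2)) ≤ ((m:ℝ)/(f:ℝ)) ^ (-((3:ℝ)/2)) :=
    aux_rpow_anti hmf0 hTge
  have hsplitpow : ((m:ℝ)/(f:ℝ)) ^ (-((3:ℝ)/2))
      = (f:ℝ) ^ ((3:ℝ)/2) * (m:ℝ) ^ (-((3:ℝ)/2)) := by
    rw [Real.rpow_neg hmf0.le, Real.div_rpow hm0.le hf0.le, Real.rpow_neg hm0.le]
    have h1 : ((m:ℝ) ^ ((3:ℝ)/2)) ≠ 0 := (Real.rpow_pos_of_pos hm0 _).ne'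
    have h2 : ((f:ℝ) ^ ((3:ℝ)/2)) ≠ 0 := (Real.rpow_pos_of_pos hf0 _).ne'
    field_simp
  have hpow : (f:ℝ) * (f:ℝ) ^ ((3:ℝ)/2) = (f:ℝ) ^ ((5:ℝ)/2) := by
    nth_rewrite 1 [← Real.rpow_one (f:ℝ)]
    rw [← Real.rpow_add hf0]
    norm_num
  calc (P {ω | ∑ i ∈ Finset.range f, X i ω = m}).toReal
      ≤ (f:ℝ) * (Cp * (T:ℝ) ^ (-((3:ℝ)/2))) := htot
    _ ≤ (f:ℝ) * (Cp * (((m:ℝ)/(f:ℝ)) ^ (-((3:ℝ)/2)))) := by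
        refine mul_le_mul_of_nonneg_left (mul_le_mul_of_nonneg_left hTanti hCp.le) hf0.le
    _ = Cp * ((f:ℝ) * (f:ℝ) ^ ((3:ℝ)/2)) * (m:ℝ) ^ (-((3:ℝ)/2)) := by
        rw [hsplitpow]; ring
    _ = Cp * (f:ℝ) ^ ((5:ℝ)/2) * (m:ℝ) ^ (-((3:ℝ)/2)) := by rw [hpow]

private lemma aux_decomp {Ω : Type*} [MeasurableSpace Ω] (P : Measure Ω)
    [IsProbabilityMeasure P] (X : ℕ → Ω → ℕ) (hXm : ∀ i, Measurable (X i))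
    (F H : Ω → ℕ) (hFm : Measurable F) (hHm : Measurable H)
    (hFH : IndepFun (fun ω => (F ω, H ω)) (fun ω i => X i ω) P) (n : ℕ) :
    (P {ω | H ω + ∑ i ∈ Finset.range (F ω), X i ω = n}).toReal
      = ∑' fh : ℕ × ℕ, ((P ((fun ω => (F ω, H ω)) ⁻¹' {fh})).toReal
          * (if fh.2 ≤ n then
              (P {ω | ∑ i ∈ Finset.range fh.1, X i ω = n - fh.2}).toReal else 0)) := by
  have hGm : Measurable (fun ω => (F ω, H ω)) := hFm.prodMk hHm
  have hXseq : Measurable (fun ω (i : ℕ) => X i ω) :=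
    measurable_pi_lambda _ (fun i => hXm i)
  set A : ℕ × ℕ → Set Ω := fun fh => (fun ω => (F ω, H ω)) ⁻¹' {fh} with hA
  set Bs : ℕ × ℕ → Set (ℕ → ℕ) := fun fh => {g : ℕ → ℕ | fh.2 + ∑ i ∈ Finset.range fh.1, g i = n}
    with hBs
  set B : ℕ × ℕ → Set Ω := fun fh => (fun ω (i : ℕ) => X i ω) ⁻¹' Bs fh with hB
  have hBsmeas : ∀ fh, MeasurableSet (Bs fh) := by
    intro fh
    have hmeas : Measurable (fun g : ℕ → ℕ => fh.2 + ∑ i ∈ Finset.range fh.1, g i) :=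
      measurable_const.add (Finset.measurable_sum _ (fun i _ => measurable_pi_apply i))
    exact hmeas (measurableSet_singleton n)
  have hAmeas : ∀ fh, MeasurableSet (A fh) := fun fh => hGm (measurableSet_singleton fh)
  have hBmeas : ∀ fh, MeasurableSet (B fh) := fun fh => hXseq (hBsmeas fh)
  have hset : {ω | H ω + ∑ i ∈ Finset.range (F ω), X i ω = n} = ⋃ fh, A fh ∩ B fh := by
    ext ω
    simp only [Set.mem_setOf_eq, Set.mem_iUnion, Set.mem_inter_iff, Set.mem_preimage,
      Set.mem_singleton_iff, A, B, Bs]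
    constructor
    · intro hω
      exact ⟨(F ω, H ω), rfl, hω⟩
    · rintro ⟨⟨f, h⟩, heq, hsum⟩
      have h1 : F ω = f := (Prod.mk.injEq _ _ _ _ ▸ heq).1
      have h2 : H ω = h := (Prod.mk.injEq _ _ _ _ ▸ heq).2
      subst h1; subst h2
      exact hsum
  have hdisj : Pairwise (Function.onFun Disjoint fun fh => A fh ∩ B fh) := by
    intro a b hab
    simp only [Function.onFun]
    rw [Set.disjoint_left]
    rintro ω ⟨h1, _⟩ ⟨h3, _⟩
    simp only [A, Set.mem_preimage, Set.mem_singleton_iff] at h1 h3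
    exact hab (h1 ▸ h3 ▸ rfl)
  have hmeasure : P {ω | H ω + ∑ i ∈ Finset.range (F ω), X i ω = n} = ∑' fh, P (A fh ∩ B fh) := by
    rw [hset, measure_iUnion hdisj (fun fh => (hAmeas fh).inter (hBmeas fh))]
  have hfactor : ∀ fh, P (A fh ∩ B fh) = P (A fh) * P (B fh) :=
    fun fh => hFH.measure_inter_preimage_eq_mul {fh} (Bs fh)
      (measurableSet_singleton fh) (hBsmeas fh)
  have hBval : ∀ fh : ℕ × ℕ, (P (B fh)).toReal = (if fh.2 ≤ n then
      (P {ω | ∑ i ∈ Finset.range fh.1, X i ω = n - fh.2}).toReal else 0) := by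
    intro fh
    by_cases hle : fh.2 ≤ n
    · rw [if_pos hle]
      congr 1
      have : B fh = {ω | ∑ i ∈ Finset.range fh.1, X i ω = n - fh.2} := by
        ext ω
        simp only [B, Bs, Set.mem_preimage, Set.mem_setOf_eq]
        omega
      rw [this]
    · rw [if_neg hle]
      have : B fh = (∅ : Set Ω) := by
        ext ω
        simp only [B, Bs, Set.mem_preimage, Set.mem_setOf_eq, Set.mem_empty_iff_false,
          iff_false]
        omega
      rw [this, measure_empty, ENNReal.toReal_zero]
  rw [hmeasure, ENNReal.tsum_toReal_eq (fun fh => measure_ne_top P _)]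
  refine tsum_congr (fun fh => ?_)
  rw [hfactor fh, ENNReal.toReal_mul, hBval fh]

private lemma aux_moment {Ω : Type*} [MeasurableSpace Ω] (P : Measure Ω)
    [IsProbabilityMeasure P] {G : Ω → ℕ × ℕ} (hG : Measurable G) (φ : ℕ × ℕ → ℝ)
    (hφ : Integrable (fun ω => φ (G ω)) P) :
    HasSum (fun fh => (P (G ⁻¹' {fh})).toReal * φ fh) (∫ ω, φ (G ω) ∂P) := by
  have hmeas : ∀ fh : ℕ × ℕ, MeasurableSet (G ⁻¹' {fh}) :=
    fun fh => hG (measurableSet_singleton fh)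
  have hdisj : Pairwise (Function.onFun Disjoint fun fh : ℕ × ℕ => G ⁻¹' {fh}) := by
    intro a b hab
    simp only [Function.onFun]
    rw [Set.disjoint_left]
    rintro ω h1 h2
    simp only [Set.mem_preimage, Set.mem_singleton_iff] at h1 h2
    exact hab (h1 ▸ h2 ▸ rfl)
  have huniv : (⋃ fh : ℕ × ℕ, G ⁻¹' {fh}) = Set.univ := by
    ext ω; simp
  have hfi : IntegrableOn (fun ω => φ (G ω)) (⋃ fh : ℕ × ℕ, G ⁻¹' {fh}) P := by
    rw [huniv]
    exact hφ.integrableOn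
  have h1 := hasSum_integral_iUnion hmeas hdisj hfi
  have h2 : ∀ fh : ℕ × ℕ, ∫ ω in G ⁻¹' {fh}, φ (G ω) ∂P = (P (G ⁻¹' {fh})).toReal * φ fh := by
    intro fh
    have hEq : Set.EqOn (fun ω => φ (G ω)) (fun _ => φ fh) (G ⁻¹' {fh}) := by
      intro ω hω
      simp only [Set.mem_preimage, Set.mem_singleton_iff] at hω
      simp [hω]
    rw [setIntegral_congr_fun (hmeas fh) hEq, setIntegral_const, smul_eq_mul, Measure.real]
  have h3 : (fun fh : ℕ × ℕ => ∫ ω in G ⁻¹' {fh}, φ (G ω) ∂P)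
      = fun fh => (P (G ⁻¹' {fh})).toReal * φ fh := funext h2
  rw [h3] at h1
  have h4 : ∫ ω in ⋃ fh : ℕ × ℕ, G ⁻¹' {fh}, φ (G ω) ∂P = ∫ ω, φ (G ω) ∂P := by
    rw [huniv, Measure.restrict_univ]
  rw [h4] at h1
  exact h1


/-- Let `(X_i)` be iid `ℕ`-valued with `n^{3/2}·P(X₁ = n) → c > 0`, and let
`(F, H)` be an `ℕ²`-valued vector independent of the sequence, with finite
exponential moments. Then `S := H + Σ_{i=1}^{F} X_i` satisfies
`P(S = n)/P(X₁ = n) → E[F]`. -/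
theorem random_sum_local_limit
    {Ω : Type*} [MeasurableSpace Ω] (P : Measure Ω) [IsProbabilityMeasure P]
    (X : ℕ → Ω → ℕ) (hXm : ∀ i, Measurable (X i))
    (hXindep : iIndepFun X P)
    (hXid : ∀ i, IdentDistrib (X i) (X 0) P P)
    (c : ℝ) (hc : 0 < c)
    (hXtail : Tendsto
      (fun n : ℕ => (n : ℝ) ^ ((3 : ℝ) / 2) * (P {ω | X 0 ω = n}).toReal)
      atTop (nhds c))
    (F H : Ω → ℕ) (hFm : Measurable F) (hHm : Measurable H)
    (hFH : IndepFun (fun ω => (F ω, H ω)) (fun ω i => X i ω) P)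
    (hexp : ∃ t : ℝ, 0 < t ∧
      Integrable (fun ω => Real.exp (t * ((F ω : ℝ) + (H ω : ℝ)))) P) :
    Tendsto (fun n : ℕ =>
        (P {ω | H ω + ∑ i ∈ Finset.range (F ω), X i ω = n}).toReal
          / (P {ω | X 0 ω = n}).toReal)
      atTop (nhds (∫ ω, (F ω : ℝ) ∂P)) := by
  classical
  obtain ⟨t, ht, hint⟩ := hexp
  set p : ℕ → ℝ := fun k => (P {ω | X 0 ω = k}).toReal with hp
  set q : ℕ → ℕ → ℝ := fun f m => (P {ω | ∑ i ∈ Finset.range f, X i ω = m}).toReal with hq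
  set G : Ω → ℕ × ℕ := fun ω => (F ω, H ω) with hG
  have hGm : Measurable G := hFm.prodMk hHm
  set w : ℕ × ℕ → ℝ := fun fh => (P (G ⁻¹' {fh})).toReal with hw
  have hp0 : ∀ k, 0 ≤ p k := fun k => ENNReal.toReal_nonneg
  have hpsum : HasSum p 1 := aux_hasSum_fiber P (hXm 0)
  have hq0 : ∀ f m, 0 ≤ q f m := fun f m => ENNReal.toReal_nonneg
  have hq00 : ∀ m, 1 ≤ m → q 0 m = 0 := by
    intro m hm
    have hempty : {ω | ∑ i ∈ Finset.range 0, X i ω = m} = (∅ : Set Ω) := by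
      ext ω; simp; omega
    simp only [hq, hempty, measure_empty, ENNReal.toReal_zero]
  have hqsum : ∀ f, HasSum (q f) 1 :=
    fun f => aux_hasSum_fiber P (Finset.measurable_sum (Finset.range f) (fun i _ => hXm i))
  have hconv : ∀ f m, q (f+1) m = ∑ k ∈ Finset.range (m+1), q f k * p (m-k) :=
    fun f m => aux_conv P X hXm hXindep hXid f m
  obtain ⟨Cp, hCp0, hub⟩ := aux_tail_ub hXtail
  have hC : ∀ f m, 1 ≤ m → q f m ≤ Cp * (f:ℝ) ^ ((5:ℝ)/2) * (m:ℝ) ^ (-((3:ℝ)/2)) :=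
    fun f m hm => aux_maxbound P X hXm hXindep hXid hCp0 hub f m hm
  have hw0 : ∀ fh, 0 ≤ w fh := fun fh => ENNReal.toReal_nonneg
  have hφexp : Integrable (fun ω => Real.exp (t * (((G ω).1:ℝ) + ((G ω).2:ℝ)))) P := hint
  have hwexp0 := aux_moment P hGm (fun fh => Real.exp (t * ((fh.1:ℝ) + (fh.2:ℝ)))) hφexp
  have hwexp : Summable (fun fh : ℕ × ℕ => w fh * Real.exp (t * ((fh.1:ℝ) + (fh.2:ℝ)))) :=
    hwexp0.summable
  have hFmr : Measurable (fun ω => ((F ω):ℝ)) := measurable_from_top.comp hFm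
  have hFint : Integrable (fun ω => ((F ω):ℝ)) P := by
    refine (hint.const_mul (1/t)).mono' hFmr.aestronglyMeasurable ?_
    filter_upwards with ω
    rw [Real.norm_of_nonneg (Nat.cast_nonneg _)]
    have hxy := Real.add_one_le_exp (t * ((F ω:ℝ) + (H ω:ℝ)))
    have h1 : 0 ≤ t * (H ω:ℝ) := by positivity
    rw [show (1/t) * Real.exp (t * ((F ω:ℝ) + (H ω:ℝ)))
        = Real.exp (t * ((F ω:ℝ) + (H ω:ℝ))) / t by ring, le_div_iff₀ ht]
    nlinarith [hxy, h1]
  have hφF : Integrable (fun ω => (((G ω).1:ℕ):ℝ)) P := hFint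
  have hEF0 := aux_moment P hGm (fun fh => (fh.1:ℝ)) hφF
  have hEF : HasSum (fun fh : ℕ × ℕ => w fh * (fh.1:ℝ)) (∫ ω, (F ω : ℝ) ∂P) := hEF0
  have hdecomp : ∀ n, (P {ω | H ω + ∑ i ∈ Finset.range (F ω), X i ω = n}).toReal
      = ∑' fh : ℕ × ℕ, w fh * (if fh.2 ≤ n then q fh.1 (n - fh.2) else 0) :=
    fun n => aux_decomp P X hXm F H hFm hHm hFH n
  exact aux_final hc hp0 hpsum hXtail hq0 hq00 hqsum hconv hCp0.le hC hw0 ht hwexp hdecomp hEF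
end

section
/- Let (X_i)_{i≥1} be an i.i.d. sequence of ℕ-valued random variables with n^{3/2}·P(X₁ = n) → c for some constant c > 0, and let (F, H) be an ℕ²-valued random vector, independent of the whole sequence (X_i), with E[exp(t·(F + H))] < ∞ for some t > 0 and P(F ≥ 1) > 0. Set S := H + Σ_{i=1}^{F} X_i. Then the conditional expectation E[F | S = n] remains bounded as n → ∞; that is, there exist a constant B and N such that for all n ≥ N one has P(S = n) > 0 and E[F | S = n] ≤ B. -/
open MeasureTheory ProbabilityTheory Filter

set_option linter.unusedSectionVars false
set_option linter.unusedVariables false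
set_option linter.deprecated false
set_option maxHeartbeats 1000000

namespace CEFB



variable {Ω : Type*} [MeasurableSpace Ω] {P : Measure Ω} [IsProbabilityMeasure P]

lemma obj (X : ℕ → Ω → ℕ) (hXm : ∀ i, Measurable (X i))
    (hXindep : iIndepFun X P)
    (hXid : ∀ i, IdentDistrib (X i) (X 0) P P)
    (C₀ : ℝ) (hC₀0 : 0 ≤ C₀)
    (hC₀ : ∀ v : ℕ, 1 ≤ v → (P {ω | X 0 ω = v}).toReal ≤ C₀ / (v : ℝ) ^ ((3:ℝ)/2))
    (k m : ℕ) (hk : 1 ≤ k) (hm : 1 ≤ m) :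
    (P {ω | ∑ i ∈ Finset.range k, X i ω = m}).toReal
      ≤ C₀ * (k:ℝ) ^ 3 / (m : ℝ) ^ ((3:ℝ)/2) := by
  have hmpos : (0:ℝ) < (m:ℝ) ^ ((3:ℝ)/2) :=
    Real.rpow_pos_of_pos (by exact_mod_cast hm) _
  -- the per-value bound
  have hval : ∀ v : ℕ, 1 ≤ v → m ≤ k * v →
      (P {ω | X 0 ω = v}).toReal ≤ C₀ * (k:ℝ)^2 / (m : ℝ) ^ ((3:ℝ)/2) := by
    intro v hv hkv
    refine le_trans (hC₀ v hv) ?_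
    have hvpos : (0:ℝ) < (v:ℝ) ^ ((3:ℝ)/2) :=
      Real.rpow_pos_of_pos (by exact_mod_cast hv) _
    rw [div_le_div_iff₀ hvpos hmpos]
    have h1 : (m:ℝ) ^ ((3:ℝ)/2) ≤ ((k:ℝ) * v) ^ ((3:ℝ)/2) := by
      apply Real.rpow_le_rpow (by positivity) (by exact_mod_cast hkv)
      norm_num
    have h2 : ((k:ℝ) * v) ^ ((3:ℝ)/2) = (k:ℝ)^((3:ℝ)/2) * (v:ℝ)^((3:ℝ)/2) :=
      Real.mul_rpow (by positivity) (by positivity)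
    have h3 : (k:ℝ)^((3:ℝ)/2) ≤ (k:ℝ)^2 := by
      rw [show ((k:ℝ)^2 : ℝ) = (k:ℝ)^((2:ℕ):ℝ) by rw [Real.rpow_natCast]]
      apply Real.rpow_le_rpow_of_exponent_le (by exact_mod_cast hk)
      push_cast; norm_num
    calc C₀ * (m:ℝ) ^ ((3:ℝ)/2) ≤ C₀ * ((k:ℝ)^((3:ℝ)/2) * (v:ℝ)^((3:ℝ)/2)) := by
          rw [← h2]; exact mul_le_mul_of_nonneg_left h1 hC₀0
      _ ≤ C₀ * ((k:ℝ)^2 * (v:ℝ)^((3:ℝ)/2)) := by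
          apply mul_le_mul_of_nonneg_left _ hC₀0
          exact mul_le_mul_of_nonneg_right h3 (le_of_lt hvpos)
      _ = C₀ * (k:ℝ)^2 * (v:ℝ)^((3:ℝ)/2) := by ring
  -- measurability helpers
  have hXiv : ∀ (i v : ℕ), MeasurableSet {ω | X i ω = v} := fun i v =>
    (hXm i) (measurableSet_singleton v)
  have hsum_meas : ∀ (s : Finset ℕ) (r : ℕ),
      MeasurableSet {ω | ∑ j ∈ s, X j ω = r} := fun s r =>
    (Finset.measurable_sum s (fun j _ => hXm j)) (measurableSet_singleton r)
  -- the union bound over which index is big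
  set A : ℕ → Set Ω := fun i =>
    {ω | ∑ j ∈ Finset.range k, X j ω = m ∧ m ≤ k * X i ω} with hA
  have hsubset : {ω | ∑ i ∈ Finset.range k, X i ω = m} ⊆
      ⋃ i ∈ Finset.range k, A i := by
    intro ω hω
    simp only [Set.mem_setOf_eq] at hω
    have : ∃ i ∈ Finset.range k, m ≤ k * X i ω := by
      by_contra hcon
      push_neg at hcon
      have h1 : k * m = ∑ i ∈ Finset.range k, k * X i ω := by
        rw [← Finset.mul_sum, hω]
      have h2 : ∑ i ∈ Finset.range k, k * X i ω ≤ ∑ _i ∈ Finset.range k, (m - 1) :=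
        Finset.sum_le_sum (fun i hi => by have := hcon i hi; omega)
      rw [Finset.sum_const, Finset.card_range, smul_eq_mul] at h2
      have h3 : k * m ≤ k * (m - 1) := by omega
      have h4 : m ≤ m - 1 := Nat.le_of_mul_le_mul_left h3 (by omega)
      omega
    obtain ⟨i, hi, hbig⟩ := this
    exact Set.mem_biUnion hi ⟨hω, hbig⟩
  -- per index bound
  have hAbound : ∀ i ∈ Finset.range k,
      (P (A i)).toReal ≤ C₀ * (k:ℝ)^2 / (m : ℝ) ^ ((3:ℝ)/2) := by
    intro i hi
    set V : Finset ℕ := (Finset.Icc 1 m).filter (fun v => m ≤ k * v) with hV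
    set B : ℕ → Set Ω := fun v =>
      {ω | X i ω = v} ∩ {ω | ∑ j ∈ (Finset.range k).erase i, X j ω = m - v} with hB
    have hAeq : A i = ⋃ v ∈ V, B v := by
      ext ω
      simp only [hA, hB, hV, Set.mem_setOf_eq, Set.mem_iUnion, Finset.mem_filter,
        Finset.mem_Icc, Set.mem_inter_iff, exists_prop]
      constructor
      · rintro ⟨hs, hbig⟩
        have hle : X i ω ≤ ∑ j ∈ Finset.range k, X j ω :=
          Finset.single_le_sum (f := fun j => X j ω) (fun j _ => Nat.zero_le _) hi
        have hsplit : ∑ j ∈ (Finset.range k).erase i, X j ω + X i ω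
            = ∑ j ∈ Finset.range k, X j ω :=
          Finset.sum_erase_add (Finset.range k) (fun j => X j ω) hi
        have hpos : 1 ≤ X i ω := by
          rcases Nat.eq_zero_or_pos (X i ω) with h0 | h0
          · rw [h0, Nat.mul_zero] at hbig; omega
          · exact h0
        exact ⟨X i ω, ⟨⟨hpos, by omega⟩, hbig⟩, rfl, by omega⟩
      · rintro ⟨v, ⟨⟨hv1, hv2⟩, hkv⟩, hXv, hrest⟩
        have hsplit : ∑ j ∈ (Finset.range k).erase i, X j ω + X i ω
            = ∑ j ∈ Finset.range k, X j ω :=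
          Finset.sum_erase_add (Finset.range k) (fun j => X j ω) hi
        constructor
        · omega
        · rw [hXv]; exact hkv
    have hfactor : ∀ v ∈ V, (P (B v)).toReal
        ≤ (C₀ * (k:ℝ)^2 / (m : ℝ) ^ ((3:ℝ)/2)) *
          (P {ω | ∑ j ∈ (Finset.range k).erase i, X j ω = m - v}).toReal := by
      intro v hv
      simp only [hV, Finset.mem_filter, Finset.mem_Icc] at hv
      have hindep : IndepFun (∑ j ∈ (Finset.range k).erase i, X j) (X i) P :=
        hXindep.indepFun_finsetSum_of_notMem hXm (Finset.notMem_erase i _)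
      have hBmul : P (B v) = P {ω | ∑ j ∈ (Finset.range k).erase i, X j ω = m - v}
          * P {ω | X i ω = v} := by
        have hmul := hindep.measure_inter_preimage_eq_mul {m - v} {v}
          (measurableSet_singleton _) (measurableSet_singleton _)
        have hset1 : (∑ j ∈ (Finset.range k).erase i, X j) ⁻¹' {m - v}
            = {ω | ∑ j ∈ (Finset.range k).erase i, X j ω = m - v} := by
          ext ω; simp [Finset.sum_apply]
        have hset2 : (X i) ⁻¹' {v} = {ω | X i ω = v} := rfl
        have heq : B v = (∑ j ∈ (Finset.range k).erase i, X j) ⁻¹' {m - v}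
            ∩ (X i) ⁻¹' {v} := by
          rw [hset1, hset2, hB]; ext ω
          simp only [Set.mem_inter_iff, Set.mem_setOf_eq]; tauto
        rw [heq, hmul, hset1, hset2]
      have hXi0 : P {ω | X i ω = v} = P {ω | X 0 ω = v} :=
        (hXid i).measure_mem_eq (measurableSet_singleton v)
      rw [hBmul, hXi0, ENNReal.toReal_mul, mul_comm]
      exact mul_le_mul_of_nonneg_right (hval v hv.1.1 hv.2) ENNReal.toReal_nonneg
    -- disjointness of the rest-events
    have hdisj : (V : Set ℕ).Pairwise (Function.onFun Disjoint
        fun v => {ω | ∑ j ∈ (Finset.range k).erase i, X j ω = m - v}) := by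
      intro v hv w hw hvw
      simp only [hV, Finset.coe_filter, Finset.mem_Icc, Set.mem_setOf_eq] at hv hw
      apply Set.disjoint_left.mpr
      intro ω h1 h2
      simp only [Set.mem_setOf_eq] at h1 h2
      exact hvw (by omega)
    have hsum1 : ∑ v ∈ V,
        (P {ω | ∑ j ∈ (Finset.range k).erase i, X j ω = m - v}).toReal ≤ 1 := by
      rw [← ENNReal.toReal_sum (fun v _ => measure_ne_top P _)]
      rw [← measure_biUnion_finset hdisj (fun v _ => hsum_meas _ _)]
      calc (P _).toReal ≤ (P Set.univ).toReal :=
            ENNReal.toReal_mono (measure_ne_top P _) (measure_mono (Set.subset_univ _))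
        _ = 1 := by simp
    calc (P (A i)).toReal ≤ (∑ v ∈ V, P (B v)).toReal := by
          apply ENNReal.toReal_mono
          · exact (ENNReal.sum_lt_top.mpr (fun v _ => measure_lt_top P _)).ne
          · rw [hAeq]; exact measure_biUnion_finset_le V B
      _ = ∑ v ∈ V, (P (B v)).toReal :=
          ENNReal.toReal_sum (fun v _ => measure_ne_top P _)
      _ ≤ ∑ v ∈ V, (C₀ * (k:ℝ)^2 / (m : ℝ) ^ ((3:ℝ)/2)) *
            (P {ω | ∑ j ∈ (Finset.range k).erase i, X j ω = m - v}).toReal :=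
          Finset.sum_le_sum hfactor
      _ = (C₀ * (k:ℝ)^2 / (m : ℝ) ^ ((3:ℝ)/2)) * ∑ v ∈ V,
            (P {ω | ∑ j ∈ (Finset.range k).erase i, X j ω = m - v}).toReal := by
          rw [Finset.mul_sum]
      _ ≤ (C₀ * (k:ℝ)^2 / (m : ℝ) ^ ((3:ℝ)/2)) * 1 := by
          apply mul_le_mul_of_nonneg_left hsum1 (by positivity)
      _ = C₀ * (k:ℝ)^2 / (m : ℝ) ^ ((3:ℝ)/2) := mul_one _
  calc (P {ω | ∑ i ∈ Finset.range k, X i ω = m}).toReal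
      ≤ (∑ i ∈ Finset.range k, P (A i)).toReal := by
        apply ENNReal.toReal_mono
        · exact (ENNReal.sum_lt_top.mpr (fun v _ => measure_lt_top P _)).ne
        · exact le_trans (measure_mono hsubset) (measure_biUnion_finset_le _ A)
    _ = ∑ i ∈ Finset.range k, (P (A i)).toReal :=
        ENNReal.toReal_sum (fun v _ => measure_ne_top P _)
    _ ≤ ∑ _i ∈ Finset.range k, C₀ * (k:ℝ)^2 / (m : ℝ) ^ ((3:ℝ)/2) :=
        Finset.sum_le_sum hAbound
    _ = (k:ℝ) * (C₀ * (k:ℝ)^2 / (m : ℝ) ^ ((3:ℝ)/2)) := by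
        rw [Finset.sum_const, Finset.card_range, nsmul_eq_mul]
    _ = C₀ * (k:ℝ)^3 / (m : ℝ) ^ ((3:ℝ)/2) := by ring



variable {Ω : Type*} [MeasurableSpace Ω] {P : Measure Ω} [IsProbabilityMeasure P]

omit [IsProbabilityMeasure P] in
lemma splitFH (X : ℕ → Ω → ℕ) (F H : Ω → ℕ)
    (hFH : IndepFun (fun ω => (F ω, H ω)) (fun ω i => X i ω) P)
    (k h : ℕ) (s : Set (ℕ → ℕ)) (hs : MeasurableSet s) :
    P ({ω | F ω = k ∧ H ω = h} ∩ {ω | (fun i => X i ω) ∈ s})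
      = P {ω | F ω = k ∧ H ω = h} * P {ω | (fun i => X i ω) ∈ s} := by
  have hmul := hFH.measure_inter_preimage_eq_mul {(k, h)} s
    (measurableSet_singleton _) hs
  have h1 : (fun ω => (F ω, H ω)) ⁻¹' {(k, h)} = {ω | F ω = k ∧ H ω = h} := by
    ext ω; simp [Prod.ext_iff]
  have h2 : (fun ω i => X i ω) ⁻¹' s = {ω | (fun i => X i ω) ∈ s} := rfl
  rw [h1, h2] at hmul
  exact hmul

lemma Smeas (X : ℕ → Ω → ℕ) (hXm : ∀ i, Measurable (X i))
    (F H : Ω → ℕ) (hFm : Measurable F) (hHm : Measurable H) (n : ℕ) :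
    MeasurableSet {ω | H ω + ∑ i ∈ Finset.range (F ω), X i ω = n} := by
  have : {ω | H ω + ∑ i ∈ Finset.range (F ω), X i ω = n}
      = ⋃ k : ℕ, ({ω | F ω = k} ∩ {ω | H ω + ∑ i ∈ Finset.range k, X i ω = n}) := by
    ext ω
    simp only [Set.mem_setOf_eq, Set.mem_iUnion, Set.mem_inter_iff]
    constructor
    · intro hω; exact ⟨F ω, rfl, hω⟩
    · rintro ⟨k, hk, hω⟩; rw [hk]; exact hω
  rw [this]
  refine MeasurableSet.iUnion fun k => MeasurableSet.inter ?_ ?_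
  · exact hFm (measurableSet_singleton k)
  · exact (hHm.add (Finset.measurable_sum _ (fun i _ => hXm i)))
      (measurableSet_singleton n)

lemma lower (X : ℕ → Ω → ℕ) (hXm : ∀ i, Measurable (X i))
    (hXindep : iIndepFun X P)
    (hXid : ∀ i, IdentDistrib (X i) (X 0) P P)
    (F H : Ω → ℕ)
    (hFH : IndepFun (fun ω => (F ω, H ω)) (fun ω i => X i ω) P)
    (c : ℝ) (hc : 0 < c) (N₀ : ℕ) (hN₀ : 1 ≤ N₀)
    (plow : ∀ v : ℕ, N₀ ≤ v →
      c / 2 / (v:ℝ) ^ ((3:ℝ)/2) ≤ (P {ω | X 0 ω = v}).toReal)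
    (f₀ h₀ : ℕ) (hf₀ : 1 ≤ f₀)
    (n : ℕ) (hn : h₀ + f₀ * N₀ ≤ n) :
    (P {ω | F ω = f₀ ∧ H ω = h₀}).toReal *
      ((P {ω | X 0 ω = N₀}).toReal ^ (f₀ - 1) * (c / 2 / (n:ℝ) ^ ((3:ℝ)/2)))
      ≤ (P {ω | H ω + ∑ i ∈ Finset.range (F ω), X i ω = n}).toReal := by
  set mn : ℕ := n - h₀ - (f₀ - 1) * N₀ with hmn
  have hmnN₀ : N₀ ≤ mn := by
    have : f₀ * N₀ = (f₀ - 1) * N₀ + N₀ := by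
      cases f₀ with
      | zero => omega
      | succ j => simp [Nat.succ_sub_one, Nat.succ_mul]
    omega
  set vfun : ℕ → ℕ := fun i => if i = 0 then mn else N₀ with hvfun
  -- the X-event
  set s : Set (ℕ → ℕ) := ⋂ i ∈ Finset.range f₀, (fun g : ℕ → ℕ => g i) ⁻¹' {vfun i}
    with hs
  have hsmeas : MeasurableSet s :=
    MeasurableSet.biInter (Finset.range f₀).countable_toSet
      (fun i _ => (measurable_pi_apply i) (measurableSet_singleton _))
  have hXev : {ω | (fun i => X i ω) ∈ s} = ⋂ i ∈ Finset.range f₀, {ω | X i ω = vfun i} := by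
    ext ω; simp [hs]
  -- subset of target
  have hsubset : {ω | F ω = f₀ ∧ H ω = h₀} ∩ {ω | (fun i => X i ω) ∈ s}
      ⊆ {ω | H ω + ∑ i ∈ Finset.range (F ω), X i ω = n} := by
    rintro ω ⟨⟨hF, hH⟩, hX⟩
    rw [hXev] at hX
    simp only [Set.mem_iInter, Set.mem_setOf_eq, Finset.mem_coe] at hX
    have hXval : ∀ i ∈ Finset.range f₀, X i ω = vfun i := by
      intro i hi
      exact hX i hi
    have hsum : ∑ i ∈ Finset.range (F ω), X i ω = ∑ i ∈ Finset.range f₀, vfun i := by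
      rw [hF]; exact Finset.sum_congr rfl hXval
    have hsumv : ∑ i ∈ Finset.range f₀, vfun i = mn + (f₀ - 1) * N₀ := by
      obtain ⟨j, rfl⟩ : ∃ j, f₀ = j + 1 := ⟨f₀ - 1, by omega⟩
      rw [Finset.sum_range_succ' vfun j]
      have h1 : ∀ i ∈ Finset.range j, vfun (i + 1) = N₀ := by
        intro i _; simp [hvfun]
      rw [Finset.sum_congr rfl h1, Finset.sum_const, Finset.card_range, smul_eq_mul]
      simp [hvfun]
      ring
    simp only [Set.mem_setOf_eq]
    rw [hH, hsum, hsumv]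
    omega
  -- compute the probability of the intersection
  have hprod : P {ω | (fun i => X i ω) ∈ s}
      = ∏ i ∈ Finset.range f₀, P {ω | X i ω = vfun i} := by
    rw [hXev]
    exact (iIndepFun_iff _ _ _).mp hXindep (Finset.range f₀)
      (fun i _ => MeasurableSpace.measurableSet_comap.mpr
        ⟨{vfun i}, measurableSet_singleton _, rfl⟩)
  have hid : ∀ i, P {ω | X i ω = vfun i} = P {ω | X 0 ω = vfun i} := fun i =>
    (hXid i).measure_mem_eq (measurableSet_singleton _)
  have hsplit := splitFH X F H hFH f₀ h₀ s hsmeas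
  -- now go to real numbers
  have key : (P ({ω | F ω = f₀ ∧ H ω = h₀} ∩ {ω | (fun i => X i ω) ∈ s})).toReal
      = (P {ω | F ω = f₀ ∧ H ω = h₀}).toReal *
        ∏ i ∈ Finset.range f₀, (P {ω | X 0 ω = vfun i}).toReal := by
    rw [hsplit, hprod, ENNReal.toReal_mul]
    congr 1
    rw [ENNReal.toReal_prod]
    exact Finset.prod_congr rfl (fun i _ => by rw [hid i])
  have hprodval : ∏ i ∈ Finset.range f₀, (P {ω | X 0 ω = vfun i}).toReal
      = (P {ω | X 0 ω = mn}).toReal * (P {ω | X 0 ω = N₀}).toReal ^ (f₀ - 1) := by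
    obtain ⟨j, rfl⟩ : ∃ j, f₀ = j + 1 := ⟨f₀ - 1, by omega⟩
    rw [Finset.prod_range_succ' (fun i => (P {ω | X 0 ω = vfun i}).toReal) j]
    have h1 : ∀ i ∈ Finset.range j,
        (P {ω | X 0 ω = vfun (i+1)}).toReal = (P {ω | X 0 ω = N₀}).toReal := by
      intro i _; simp [hvfun]
    rw [Finset.prod_congr rfl h1, Finset.prod_const, Finset.card_range]
    simp [hvfun]
    ring
  have hmono : (P ({ω | F ω = f₀ ∧ H ω = h₀} ∩ {ω | (fun i => X i ω) ∈ s})).toReal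
      ≤ (P {ω | H ω + ∑ i ∈ Finset.range (F ω), X i ω = n}).toReal :=
    ENNReal.toReal_mono (measure_ne_top P _) (measure_mono hsubset)
  refine le_trans ?_ hmono
  rw [key, hprodval]
  -- remains: q * (pN₀^(f₀-1) * (c/2/n^{3/2})) ≤ q * (p mn * pN₀^{f₀-1})
  have hlow_mn : c / 2 / (n:ℝ) ^ ((3:ℝ)/2) ≤ (P {ω | X 0 ω = mn}).toReal := by
    refine le_trans ?_ (plow mn hmnN₀)
    apply div_le_div_of_nonneg_left (by positivity) ?_ ?_
    · exact Real.rpow_pos_of_pos (by exact_mod_cast (by omega : (1:ℕ) ≤ mn)) _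
    · apply Real.rpow_le_rpow (by positivity) ?_ (by norm_num)
      exact_mod_cast (by omega : mn ≤ n)
  have h2 : (P {ω | X 0 ω = N₀}).toReal ^ (f₀ - 1) * (c / 2 / (n:ℝ) ^ ((3:ℝ)/2))
      ≤ (P {ω | X 0 ω = mn}).toReal * (P {ω | X 0 ω = N₀}).toReal ^ (f₀ - 1) := by
    rw [mul_comm]
    exact mul_le_mul_of_nonneg_right hlow_mn (by positivity)
  exact mul_le_mul_of_nonneg_left h2 ENNReal.toReal_nonneg

lemma upper (X : ℕ → Ω → ℕ) (hXm : ∀ i, Measurable (X i))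
    (hXindep : iIndepFun X P)
    (hXid : ∀ i, IdentDistrib (X i) (X 0) P P)
    (F H : Ω → ℕ) (hFm : Measurable F) (hHm : Measurable H)
    (hFH : IndepFun (fun ω => (F ω, H ω)) (fun ω i => X i ω) P)
    (C₀ : ℝ) (hC₀0 : 0 ≤ C₀)
    (hobj : ∀ k m : ℕ, 1 ≤ k → 1 ≤ m →
      (P {ω | ∑ i ∈ Finset.range k, X i ω = m}).toReal
        ≤ C₀ * (k:ℝ) ^ 3 / (m : ℝ) ^ ((3:ℝ)/2))
    (t : ℝ) (ht : 0 < t)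
    (hint : Integrable (fun ω => Real.exp (t * ((F ω:ℝ) + (H ω:ℝ)))) P)
    (n : ℕ) (hn : 1 ≤ n) :
    ∫ ω in {ω | H ω + ∑ i ∈ Finset.range (F ω), X i ω = n}, (F ω : ℝ) ∂P
      ≤ (2/t) * Real.exp (-(t * (n:ℝ)) / 4)
          * (∫ ω, Real.exp (t * ((F ω:ℝ) + (H ω:ℝ))) ∂P)
        + 4*C₀*(8/t)^4 * (∫ ω, Real.exp (t * ((F ω:ℝ) + (H ω:ℝ))) ∂P)
          / (n:ℝ)^((3:ℝ)/2) := by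
  set G : Ω → ℝ := fun ω => Real.exp (t * ((F ω:ℝ) + (H ω:ℝ))) with hG
  set M : ℝ := ∫ ω, G ω ∂P with hM
  have hMnonneg : 0 ≤ M := integral_nonneg (fun ω => (Real.exp_pos _).le)
  set A : Set Ω := {ω | H ω + ∑ i ∈ Finset.range (F ω), X i ω = n} with hA
  have hAmeas : MeasurableSet A := Smeas X hXm F H hFm hHm n
  set K : ℕ := n / 2 with hK
  set box : Finset (ℕ × ℕ) := Finset.range (K+1) ×ˢ Finset.range (K+1) with hbox
  set E : ℕ → ℕ → Set Ω := fun k h => {ω | F ω = k} ∩ ({ω | H ω = h} ∩ A) with hE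
  have hEmeas : ∀ k h, MeasurableSet (E k h) := fun k h =>
    (hFm (measurableSet_singleton k)).inter
      ((hHm (measurableSet_singleton h)).inter hAmeas)
  set c1 : ℝ := (2/t) * Real.exp (-(t * (n:ℝ)) / 4) with hc1
  have hc1nonneg : 0 ≤ c1 := by positivity
  set φ : Ω → ℝ := A.indicator (fun ω => (F ω : ℝ)) with hφ
  set ψ : Ω → ℝ := fun ω => c1 * G ω
      + ∑ q ∈ box, (E q.1 q.2).indicator (fun _ => (q.1:ℝ)) ω with hψ
  have hφ0 : ∀ ω, 0 ≤ φ ω := fun ω =>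
    Set.indicator_nonneg (fun ω _ => Nat.cast_nonneg _) ω
  have hsum_nonneg : ∀ ω, 0 ≤ ∑ q ∈ box, (E q.1 q.2).indicator (fun _ => (q.1:ℝ)) ω :=
    fun ω => Finset.sum_nonneg fun q _ =>
      Set.indicator_nonneg (fun _ _ => Nat.cast_nonneg _) ω
  -- pointwise bound
  have hpt : ∀ ω, φ ω ≤ ψ ω := by
    intro ω
    by_cases hωA : ω ∈ A
    · rw [hφ, Set.indicator_of_mem hωA]
      by_cases hcase : F ω ≤ K ∧ H ω ≤ K
      · have hqmem : (F ω, H ω) ∈ box := by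
          simp only [hbox, Finset.mem_product, Finset.mem_range]
          omega
        have hωE : ω ∈ E (F ω) (H ω) := ⟨rfl, rfl, hωA⟩
        have hterm : (F ω : ℝ)
            = (E (F ω) (H ω)).indicator (fun _ => ((F ω : ℕ):ℝ)) ω := by
          rw [Set.indicator_of_mem hωE]
        have hle : (F ω : ℝ) ≤ ∑ q ∈ box, (E q.1 q.2).indicator (fun _ => (q.1:ℝ)) ω := by
          rw [hterm]
          exact Finset.single_le_sum
            (f := fun q => (E q.1 q.2).indicator (fun _ => ((q.1:ℕ):ℝ)) ω)
            (fun q _ => Set.indicator_nonneg (fun _ _ => Nat.cast_nonneg _) ω) hqmem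
        have : 0 ≤ c1 * G ω := mul_nonneg hc1nonneg (Real.exp_pos _).le
        calc (F ω : ℝ) ≤ ∑ q ∈ box, (E q.1 q.2).indicator (fun _ => (q.1:ℝ)) ω := hle
          _ ≤ ψ ω := by simp only [hψ]; linarith
      · -- big case
        have hbig : (K:ℝ) + 1 ≤ (F ω : ℝ) + (H ω : ℝ) := by
          push_neg at hcase
          have : K + 1 ≤ F ω + H ω := by
            rcases le_or_gt (F ω) K with h1 | h1
            · have := hcase h1; omega
            · omega
          exact_mod_cast this
        have hn2 : (n:ℝ) / 2 ≤ (K:ℝ) + 1 := by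
          have : n ≤ 2 * (K + 1) := by omega
          have : (n:ℝ) ≤ 2 * ((K:ℝ) + 1) := by exact_mod_cast this
          linarith
        have hFH0 : (0:ℝ) ≤ (F ω : ℝ) + (H ω : ℝ) := by positivity
        -- step 1 : F ω ≤ (2/t) exp (t (F+H)/2)
        have hstep1 : (F ω : ℝ) ≤ (2/t) * Real.exp (t * ((F ω:ℝ) + (H ω:ℝ)) / 2) := by
          have h1 : t * (F ω : ℝ) / 2 ≤ Real.exp (t * (F ω : ℝ) / 2) := by
            have := Real.add_one_le_exp (t * (F ω : ℝ) / 2)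
            linarith
          have h2 : Real.exp (t * (F ω : ℝ) / 2)
              ≤ Real.exp (t * ((F ω:ℝ) + (H ω:ℝ)) / 2) := by
            apply Real.exp_le_exp.mpr
            have : (0:ℝ) ≤ (H ω : ℝ) := Nat.cast_nonneg _
            nlinarith
          have h3 : t * (F ω : ℝ) / 2 ≤ Real.exp (t * ((F ω:ℝ) + (H ω:ℝ)) / 2) :=
            le_trans h1 h2
          calc (F ω : ℝ) = (2/t) * (t * (F ω : ℝ) / 2) := by field_simp
            _ ≤ (2/t) * Real.exp (t * ((F ω:ℝ) + (H ω:ℝ)) / 2) := by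
                apply mul_le_mul_of_nonneg_left h3 (by positivity)
        -- step 2 : exp (t(F+H)/2) ≤ exp(-(t n)/4) * exp(t(F+H))
        have hstep2 : Real.exp (t * ((F ω:ℝ) + (H ω:ℝ)) / 2)
            ≤ Real.exp (-(t * (n:ℝ)) / 4) * G ω := by
          rw [hG]
          rw [← Real.exp_add]
          apply Real.exp_le_exp.mpr
          have hFHn : (n:ℝ) / 2 ≤ (F ω:ℝ) + (H ω:ℝ) := le_trans hn2 hbig
          nlinarith
        have : (F ω : ℝ) ≤ c1 * G ω := by
          calc (F ω : ℝ) ≤ (2/t) * Real.exp (t * ((F ω:ℝ) + (H ω:ℝ)) / 2) := hstep1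
            _ ≤ (2/t) * (Real.exp (-(t * (n:ℝ)) / 4) * G ω) := by
                apply mul_le_mul_of_nonneg_left hstep2 (by positivity)
            _ = c1 * G ω := by rw [hc1]; ring
        have := hsum_nonneg ω
        simp only [hψ]; linarith
    · rw [hφ, Set.indicator_of_notMem hωA]
      have h1 : 0 ≤ c1 * G ω := mul_nonneg hc1nonneg (Real.exp_pos _).le
      have h2 := hsum_nonneg ω
      simp only [hψ]; linarith
  -- integrability
  have hψint : Integrable ψ P := by
    apply Integrable.add (hint.const_mul c1)
    exact integrable_finset_sum box (fun q _ =>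
      (integrable_const _).indicator (hEmeas q.1 q.2))
  have hφmeas : AEStronglyMeasurable φ P := by
    apply Measurable.aestronglyMeasurable
    exact (measurable_from_top.comp hFm).indicator hAmeas
  have hφint : Integrable φ P := by
    apply Integrable.mono' hψint hφmeas
    filter_upwards with ω
    rw [Real.norm_of_nonneg (hφ0 ω)]
    exact hpt ω
  -- main integral computation
  have hstart : ∫ ω in A, (F ω : ℝ) ∂P = ∫ ω, φ ω ∂P :=
    (integral_indicator hAmeas).symm
  rw [hstart]
  have hmono : ∫ ω, φ ω ∂P ≤ ∫ ω, ψ ω ∂P := integral_mono hφint hψint hpt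
  -- compute ∫ ψ
  have hψval : ∫ ω, ψ ω ∂P = c1 * M
      + ∑ q ∈ box, (P (E q.1 q.2)).toReal * (q.1:ℝ) := by
    rw [hψ]
    rw [integral_add (hint.const_mul c1) (integrable_finset_sum box (fun q _ =>
      (integrable_const _).indicator (hEmeas q.1 q.2)))]
    congr 1
    · rw [integral_const_mul]
    · rw [integral_finset_sum box (fun q _ =>
        (integrable_const _).indicator (hEmeas q.1 q.2))]
      exact Finset.sum_congr rfl (fun q _ => by
        rw [integral_indicator_const _ (hEmeas q.1 q.2), smul_eq_mul]; rfl)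
  -- bound each term of the sum
  have hterm : ∀ q ∈ box, (P (E q.1 q.2)).toReal * (q.1:ℝ)
      ≤ (4*C₀/(n:ℝ)^((3:ℝ)/2)) * ((q.1:ℝ)^4
          * (P {ω | F ω = q.1 ∧ H ω = q.2}).toReal) := by
    rintro ⟨k, h⟩ hq
    simp only [hbox, Finset.mem_product, Finset.mem_range] at hq
    rcases Nat.eq_zero_or_pos k with hk0 | hk1
    · subst hk0
      simp only [Nat.cast_zero]
      rw [mul_zero]
      positivity
    -- independence split
    set s : Set (ℕ → ℕ) := (fun g : ℕ → ℕ => h + ∑ i ∈ Finset.range k, g i) ⁻¹' {n}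
      with hsdef
    have hsmeas : MeasurableSet s := by
      apply Measurable.comp (f := fun g : ℕ → ℕ => h + ∑ i ∈ Finset.range k, g i)
        (g := id) measurable_id ?_ (measurableSet_singleton n)
      exact measurable_const.add (Finset.measurable_sum _ (fun i _ => measurable_pi_apply i))
    have hEeq : E k h = {ω | F ω = k ∧ H ω = h} ∩ {ω | (fun i => X i ω) ∈ s} := by
      ext ω
      simp only [hE, hA, hsdef, Set.mem_inter_iff, Set.mem_setOf_eq, Set.mem_preimage,
        Set.mem_singleton_iff]
      constructor
      · rintro ⟨hFk, hHh, hSn⟩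
        rw [hFk, hHh] at hSn
        exact ⟨⟨hFk, hHh⟩, hSn⟩
      · rintro ⟨⟨hFk, hHh⟩, hsum⟩
        refine ⟨hFk, hHh, ?_⟩
        rw [hFk, hHh]
        exact hsum
    have hsplit : P (E k h) = P {ω | F ω = k ∧ H ω = h} * P {ω | (fun i => X i ω) ∈ s} := by
      rw [hEeq]; exact splitFH X F H hFH k h s hsmeas
    -- the rest-event
    set m : ℕ := n - h with hm
    have hm1 : 1 ≤ m := by omega
    have hrest : {ω | (fun i => X i ω) ∈ s} = {ω | ∑ i ∈ Finset.range k, X i ω = m} := by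
      ext ω
      simp only [hsdef, Set.mem_setOf_eq, Set.mem_preimage, Set.mem_singleton_iff]
      omega
    have hPrest : (P {ω | (fun i => X i ω) ∈ s}).toReal
        ≤ C₀ * (k:ℝ)^3 / (m:ℝ)^((3:ℝ)/2) := by
      rw [hrest]; exact hobj k m hk1 hm1
    -- m^{3/2} vs n^{3/2}
    have hnm : (n:ℝ) ≤ 2 * (m:ℝ) := by
      have : n ≤ 2 * m := by omega
      exact_mod_cast this
    have hmn32 : (n:ℝ)^((3:ℝ)/2) ≤ 4 * (m:ℝ)^((3:ℝ)/2) := by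
      have h1 : (n:ℝ)^((3:ℝ)/2) ≤ (2*(m:ℝ))^((3:ℝ)/2) :=
        Real.rpow_le_rpow (by positivity) hnm (by norm_num)
      have h2 : (2*(m:ℝ))^((3:ℝ)/2) = 2^((3:ℝ)/2) * (m:ℝ)^((3:ℝ)/2) :=
        Real.mul_rpow (by norm_num) (by positivity)
      have h3 : (2:ℝ)^((3:ℝ)/2) ≤ 4 := by
        have : (2:ℝ)^((3:ℝ)/2) ≤ (2:ℝ)^((2:ℝ)) :=
          Real.rpow_le_rpow_of_exponent_le (by norm_num) (by norm_num)
        have h4 : (2:ℝ)^((2:ℝ)) = 4 := by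
          rw [show ((2:ℝ):ℝ) = ((2:ℕ):ℝ) by norm_num, Real.rpow_natCast]; norm_num
        linarith
      have hm32pos : (0:ℝ) < (m:ℝ)^((3:ℝ)/2) :=
        Real.rpow_pos_of_pos (by exact_mod_cast hm1) _
      nlinarith
    have hPrest2 : (P {ω | (fun i => X i ω) ∈ s}).toReal
        ≤ 4 * C₀ * (k:ℝ)^3 / (n:ℝ)^((3:ℝ)/2) := by
      refine le_trans hPrest ?_
      have hm32pos : (0:ℝ) < (m:ℝ)^((3:ℝ)/2) :=
        Real.rpow_pos_of_pos (by exact_mod_cast hm1) _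
      have hn32pos : (0:ℝ) < (n:ℝ)^((3:ℝ)/2) :=
        Real.rpow_pos_of_pos (by exact_mod_cast hn) _
      rw [div_le_div_iff₀ hm32pos hn32pos]
      have hk3 : (0:ℝ) ≤ C₀ * (k:ℝ)^3 := by positivity
      nlinarith
    rw [hsplit, ENNReal.toReal_mul]
    have hq1 : (P {ω | F ω = k ∧ H ω = h}).toReal ≤ 1 := by
      apply ENNReal.toReal_le_of_le_ofReal (by norm_num)
      simp only [ENNReal.ofReal_one]
      exact prob_le_one
    have hknn : (0:ℝ) ≤ (k:ℝ) := Nat.cast_nonneg _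
    have hPnn : (0:ℝ) ≤ (P {ω | F ω = k ∧ H ω = h}).toReal := ENNReal.toReal_nonneg
    calc (P {ω | F ω = k ∧ H ω = h}).toReal * (P {ω | (fun i => X i ω) ∈ s}).toReal * (k:ℝ)
        ≤ (P {ω | F ω = k ∧ H ω = h}).toReal
            * (4 * C₀ * (k:ℝ)^3 / (n:ℝ)^((3:ℝ)/2)) * (k:ℝ) := by
          apply mul_le_mul_of_nonneg_right _ hknn
          exact mul_le_mul_of_nonneg_left hPrest2 hPnn
      _ = (4*C₀/(n:ℝ)^((3:ℝ)/2)) * ((k:ℝ)^4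
            * (P {ω | F ω = k ∧ H ω = h}).toReal) := by ring
  -- sum of k^4 * P(F=k,H=h) bounded by (8/t)^4 M
  have hE' : ∀ (k h : ℕ), MeasurableSet {ω | F ω = k ∧ H ω = h} := by
    intro k h
    have : {ω | F ω = k ∧ H ω = h} = {ω | F ω = k} ∩ {ω | H ω = h} := rfl
    rw [this]
    exact (hFm (measurableSet_singleton k)).inter (hHm (measurableSet_singleton h))
  have hmoment : ∑ q ∈ box, (q.1:ℝ)^4 * (P {ω | F ω = q.1 ∧ H ω = q.2}).toReal
      ≤ (8/t)^4 * M := by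
    have hptw : ∀ q ∈ box, (q.1:ℝ)^4 * (P {ω | F ω = q.1 ∧ H ω = q.2}).toReal
        ≤ (8/t)^4 * (Real.exp (t * ((q.1:ℝ) + (q.2:ℝ)))
            * (P {ω | F ω = q.1 ∧ H ω = q.2}).toReal) := by
      rintro ⟨k, h⟩ _
      have hk4 : (k:ℝ)^4 ≤ (8/t)^4 * Real.exp (t * ((k:ℝ) + (h:ℝ))) := by
        have h1 : t * (k:ℝ) / 8 ≤ Real.exp (t * (k:ℝ) / 8) := by
          have := Real.add_one_le_exp (t * (k:ℝ) / 8); linarith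
        have h2 : (k:ℝ) ≤ (8/t) * Real.exp (t * (k:ℝ) / 8) := by
          calc (k:ℝ) = (8/t) * (t * (k:ℝ) / 8) := by field_simp
            _ ≤ (8/t) * Real.exp (t * (k:ℝ) / 8) := by
              apply mul_le_mul_of_nonneg_left h1 (by positivity)
        have h3 : (k:ℝ)^4 ≤ ((8/t) * Real.exp (t * (k:ℝ) / 8))^4 :=
          pow_le_pow_left₀ (Nat.cast_nonneg _) h2 4
        have h4 : ((8/t) * Real.exp (t * (k:ℝ) / 8))^4
            = (8/t)^4 * Real.exp (t * (k:ℝ) / 8 * 4) := by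
          rw [mul_pow, ← Real.exp_nat_mul]
          ring_nf
        have h5 : Real.exp (t * (k:ℝ) / 8 * 4) ≤ Real.exp (t * ((k:ℝ) + (h:ℝ))) := by
          apply Real.exp_le_exp.mpr
          have hk0 : (0:ℝ) ≤ (k:ℝ) := Nat.cast_nonneg _
          have hh0 : (0:ℝ) ≤ (h:ℝ) := Nat.cast_nonneg _
          nlinarith
        calc (k:ℝ)^4 ≤ ((8/t) * Real.exp (t * (k:ℝ) / 8))^4 := h3
          _ = (8/t)^4 * Real.exp (t * (k:ℝ) / 8 * 4) := h4
          _ ≤ (8/t)^4 * Real.exp (t * ((k:ℝ) + (h:ℝ))) := by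
            apply mul_le_mul_of_nonneg_left h5 (by positivity)
      calc (k:ℝ)^4 * (P {ω | F ω = k ∧ H ω = h}).toReal
          ≤ ((8/t)^4 * Real.exp (t * ((k:ℝ) + (h:ℝ))))
              * (P {ω | F ω = k ∧ H ω = h}).toReal :=
            mul_le_mul_of_nonneg_right hk4 ENNReal.toReal_nonneg
        _ = (8/t)^4 * (Real.exp (t * ((k:ℝ) + (h:ℝ)))
              * (P {ω | F ω = k ∧ H ω = h}).toReal) := by ring
    refine le_trans (Finset.sum_le_sum hptw) ?_
    rw [← Finset.mul_sum]
    apply mul_le_mul_of_nonneg_left _ (by positivity)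
    -- ∑ exp(t(k+h)) P(F=k,H=h) ≤ M
    have hterm_int : ∀ q ∈ box, Real.exp (t * ((q.1:ℝ) + (q.2:ℝ)))
        * (P {ω | F ω = q.1 ∧ H ω = q.2}).toReal
        = ∫ ω in {ω | F ω = q.1 ∧ H ω = q.2}, G ω ∂P := by
      rintro ⟨k, h⟩ _
      rw [setIntegral_congr_fun (hE' k h)
        (g := fun _ => Real.exp (t * ((k:ℝ) + (h:ℝ))))]
      · rw [setIntegral_const, smul_eq_mul, mul_comm]; rfl
      · rintro ω ⟨hFk, hHh⟩
        simp only [hG, hFk, hHh]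
    rw [Finset.sum_congr rfl hterm_int]
    have hdisj : (↑box : Set (ℕ × ℕ)).Pairwise
        (Function.onFun Disjoint fun q : ℕ × ℕ => {ω | F ω = q.1 ∧ H ω = q.2}) := by
      rintro ⟨k, h⟩ _ ⟨k', h'⟩ _ hne
      apply Set.disjoint_left.mpr
      rintro ω ⟨h1, h2⟩ ⟨h3, h4⟩
      exact hne (by simp only [Prod.mk.injEq]; omega)
    rw [← integral_biUnion_finset box (fun q _ => hE' q.1 q.2) hdisj
      (fun q _ => hint.integrableOn)]
    exact setIntegral_le_integral hint
      (Filter.Eventually.of_forall (fun ω => (Real.exp_pos _).le))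
  -- final assembly
  calc ∫ ω, φ ω ∂P ≤ ∫ ω, ψ ω ∂P := hmono
    _ = c1 * M + ∑ q ∈ box, (P (E q.1 q.2)).toReal * (q.1:ℝ) := hψval
    _ ≤ c1 * M + ∑ q ∈ box, (4*C₀/(n:ℝ)^((3:ℝ)/2)) * ((q.1:ℝ)^4
          * (P {ω | F ω = q.1 ∧ H ω = q.2}).toReal) := by
        apply add_le_add_right
        exact Finset.sum_le_sum hterm
    _ = c1 * M + (4*C₀/(n:ℝ)^((3:ℝ)/2)) * ∑ q ∈ box, (q.1:ℝ)^4
          * (P {ω | F ω = q.1 ∧ H ω = q.2}).toReal := by rw [Finset.mul_sum]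
    _ ≤ c1 * M + (4*C₀/(n:ℝ)^((3:ℝ)/2)) * ((8/t)^4 * M) := by
        apply add_le_add_right
        apply mul_le_mul_of_nonneg_left hmoment (by positivity)
    _ = c1 * M + 4*C₀*(8/t)^4 * M / (n:ℝ)^((3:ℝ)/2) := by ring


end CEFB

open CEFB in
/-- Let `(X_i)` be iid `ℕ`-valued with `n^{3/2}·P(X₁ = n) → c > 0`, let
`(F, H)` be independent of the sequence with finite exponential moments and
`P(F ≥ 1) > 0`. Set `S := H + Σ_{i=1}^{F} X_i`. Then the conditional
expectation `E[F | S = n]` remains bounded as `n → ∞`. -/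
theorem conditional_expectation_F_bounded
    {Ω : Type*} [MeasurableSpace Ω] (P : Measure Ω) [IsProbabilityMeasure P]
    (X : ℕ → Ω → ℕ) (hXm : ∀ i, Measurable (X i))
    (hXindep : iIndepFun X P)
    (hXid : ∀ i, IdentDistrib (X i) (X 0) P P)
    (c : ℝ) (hc : 0 < c)
    (hXtail : Tendsto
      (fun n : ℕ => (n : ℝ) ^ ((3 : ℝ) / 2) * (P {ω | X 0 ω = n}).toReal)
      atTop (nhds c))
    (F H : Ω → ℕ) (hFm : Measurable F) (hHm : Measurable H)
    (hFH : IndepFun (fun ω => (F ω, H ω)) (fun ω i => X i ω) P)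
    (hexp : ∃ t : ℝ, 0 < t ∧
      Integrable (fun ω => Real.exp (t * ((F ω : ℝ) + (H ω : ℝ)))) P)
    (hFpos : 0 < P {ω | 1 ≤ F ω}) :
    ∃ B : ℝ, ∃ N : ℕ, ∀ n : ℕ, N ≤ n →
      0 < P {ω | H ω + ∑ i ∈ Finset.range (F ω), X i ω = n} ∧
      (∫ ω, (F ω : ℝ)
          ∂(ProbabilityTheory.cond P
            {ω | H ω + ∑ i ∈ Finset.range (F ω), X i ω = n})) ≤ B := by
  obtain ⟨t, ht, hint⟩ := hexp
  -- Step 1 : tail bounds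
  have htail : ∀ᶠ v : ℕ in atTop, (v : ℝ) ^ ((3:ℝ)/2) * (P {ω | X 0 ω = v}).toReal
      ∈ Set.Ioo (c/2) (2*c) :=
    hXtail.eventually_mem (Ioo_mem_nhds (by linarith) (by linarith))
  obtain ⟨N₀', hN₀'⟩ := Filter.eventually_atTop.mp htail
  set N₀ : ℕ := max N₀' 1 with hN₀def
  have hN₀1 : 1 ≤ N₀ := le_max_right _ _
  have plow : ∀ v : ℕ, N₀ ≤ v →
      c / 2 / (v:ℝ) ^ ((3:ℝ)/2) ≤ (P {ω | X 0 ω = v}).toReal := by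
    intro v hv
    have h1 := (hN₀' v (le_trans (le_max_left _ _) hv)).1
    have hvpos : (0:ℝ) < (v:ℝ) ^ ((3:ℝ)/2) :=
      Real.rpow_pos_of_pos (by exact_mod_cast lt_of_lt_of_le hN₀1 hv) _
    rw [div_le_iff₀ hvpos]
    nlinarith
  have pup : ∀ v : ℕ, N₀ ≤ v →
      (P {ω | X 0 ω = v}).toReal ≤ 2*c / (v:ℝ) ^ ((3:ℝ)/2) := by
    intro v hv
    have h1 := (hN₀' v (le_trans (le_max_left _ _) hv)).2
    have hvpos : (0:ℝ) < (v:ℝ) ^ ((3:ℝ)/2) :=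
      Real.rpow_pos_of_pos (by exact_mod_cast lt_of_lt_of_le hN₀1 hv) _
    rw [le_div_iff₀ hvpos]
    nlinarith
  -- Step 2 : the uniform upper constant
  set C₀ : ℝ := max (2*c) ((N₀:ℝ) ^ ((3:ℝ)/2)) with hC₀def
  have hC₀pos : 0 < C₀ := lt_of_lt_of_le (by linarith) (le_max_left _ _)
  have hC₀ : ∀ v : ℕ, 1 ≤ v →
      (P {ω | X 0 ω = v}).toReal ≤ C₀ / (v:ℝ) ^ ((3:ℝ)/2) := by
    intro v hv
    have hvpos : (0:ℝ) < (v:ℝ) ^ ((3:ℝ)/2) :=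
      Real.rpow_pos_of_pos (by exact_mod_cast hv) _
    rcases le_or_gt N₀ v with hcase | hcase
    · refine le_trans (pup v hcase) ?_
      have h2c : 2*c ≤ C₀ := le_max_left _ _
      gcongr
    · -- v < N₀ : use trivial bound 1
      have h1 : (P {ω | X 0 ω = v}).toReal ≤ 1 := by
        apply ENNReal.toReal_le_of_le_ofReal (by norm_num)
        simp only [ENNReal.ofReal_one]
        exact prob_le_one
      have h2 : (v:ℝ) ^ ((3:ℝ)/2) ≤ (N₀:ℝ) ^ ((3:ℝ)/2) := by
        apply Real.rpow_le_rpow (by positivity) ?_ (by norm_num)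
        exact_mod_cast hcase.le
      have h3 : (v:ℝ) ^ ((3:ℝ)/2) ≤ C₀ := le_trans h2 (le_max_right _ _)
      rw [le_div_iff₀ hvpos]
      nlinarith
  -- Step 3 : choose (f₀, h₀)
  have hchoice : ∃ q : ℕ × ℕ, P {ω | F ω = q.1 + 1 ∧ H ω = q.2} ≠ 0 := by
    by_contra hcon
    push_neg at hcon
    have hsub : {ω | 1 ≤ F ω} ⊆ ⋃ q : ℕ × ℕ, {ω | F ω = q.1 + 1 ∧ H ω = q.2} := by
      intro ω hω
      simp only [Set.mem_setOf_eq] at hω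
      exact Set.mem_iUnion.mpr ⟨(F ω - 1, H ω), ⟨by omega, rfl⟩⟩
    have hz : P {ω | 1 ≤ F ω} = 0 :=
      le_antisymm (le_trans (measure_mono hsub) (le_of_eq (measure_iUnion_null hcon)))
        (by simp)
    rw [hz] at hFpos
    exact lt_irrefl _ hFpos
  obtain ⟨q, hq⟩ := hchoice
  set f₀ : ℕ := q.1 + 1 with hf₀def
  set h₀ : ℕ := q.2 with hh₀def
  have hf₀1 : 1 ≤ f₀ := by omega
  set qR : ℝ := (P {ω | F ω = f₀ ∧ H ω = h₀}).toReal with hqRdef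
  have hqRpos : 0 < qR := ENNReal.toReal_pos hq (measure_ne_top P _)
  -- Step 4 : key constants
  set pN₀ : ℝ := (P {ω | X 0 ω = N₀}).toReal with hpN₀def
  have hpN₀pos : 0 < pN₀ := by
    have hN₀pos : (0:ℝ) < (N₀:ℝ) ^ ((3:ℝ)/2) :=
      Real.rpow_pos_of_pos (by exact_mod_cast hN₀1) _
    have h0 : 0 < c / 2 / (N₀:ℝ) ^ ((3:ℝ)/2) := by positivity
    linarith [plow N₀ le_rfl]
  set c₁ : ℝ := qR * pN₀ ^ (f₀ - 1) * (c/2) with hc₁def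
  have hc₁pos : 0 < c₁ := by positivity
  set M : ℝ := ∫ ω, Real.exp (t * ((F ω : ℝ) + (H ω : ℝ))) ∂P with hMdef
  have hMnonneg : 0 ≤ M := integral_nonneg (fun ω => (Real.exp_pos _).le)
  set C₃ : ℝ := (2/t) * M + 4*C₀*(8/t)^4 * M with hC₃def
  have hC₃nonneg : 0 ≤ C₃ := by positivity
  -- the exponential term is eventually ≤ 1/n^{3/2}
  have hevexp : ∃ N₂ : ℕ, ∀ n : ℕ, N₂ ≤ n → 1 ≤ n →
      Real.exp (-(t * (n:ℝ)) / 4) ≤ ((n:ℝ) ^ ((3:ℝ)/2))⁻¹ := by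
    have hg : Tendsto (fun n : ℕ => t * (n:ℝ) / 4) atTop atTop := by
      apply Tendsto.atTop_div_const (by norm_num)
      exact Tendsto.const_mul_atTop ht tendsto_natCast_atTop_atTop
    have h1 : Tendsto (fun n : ℕ => (t * (n:ℝ) / 4)^2 * Real.exp (-(t * (n:ℝ) / 4)))
        atTop (nhds 0) :=
      (Real.tendsto_pow_mul_exp_neg_atTop_nhds_zero 2).comp hg
    have h2 : Tendsto (fun n : ℕ => (n:ℝ)^2 * Real.exp (-(t * (n:ℝ)) / 4))
        atTop (nhds 0) := by
      have heq : ∀ n : ℕ, (n:ℝ)^2 * Real.exp (-(t * (n:ℝ)) / 4)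
          = (16/t^2) * ((t * (n:ℝ) / 4)^2 * Real.exp (-(t * (n:ℝ) / 4))) := by
        intro n
        have harg : -(t * (n:ℝ)) / 4 = -(t * (n:ℝ) / 4) := by ring
        rw [harg]
        field_simp
        ring
      simp only [heq]
      have h3 := h1.const_mul (16/t^2)
      simpa using h3
    have h3 : ∀ᶠ n : ℕ in atTop, (n:ℝ)^2 * Real.exp (-(t * (n:ℝ)) / 4) < 1 :=
      h2.eventually_lt_const (by norm_num)
    obtain ⟨N₂, hN₂⟩ := Filter.eventually_atTop.mp h3
    refine ⟨N₂, fun n hn hn1 => ?_⟩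
    have h4 := hN₂ n hn
    have hnpos : (0:ℝ) < (n:ℝ) := by exact_mod_cast hn1
    have h32pos : (0:ℝ) < (n:ℝ) ^ ((3:ℝ)/2) := Real.rpow_pos_of_pos hnpos _
    have h5 : (n:ℝ) ^ ((3:ℝ)/2) ≤ (n:ℝ)^2 := by
      rw [show ((n:ℝ)^2 : ℝ) = (n:ℝ)^((2:ℕ):ℝ) by rw [Real.rpow_natCast]]
      apply Real.rpow_le_rpow_of_exponent_le (by exact_mod_cast hn1)
      push_cast; norm_num
    have h6 : (n:ℝ)^((3:ℝ)/2) * Real.exp (-(t * (n:ℝ)) / 4) ≤ 1 := by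
      nlinarith [Real.exp_pos (-(t * (n:ℝ)) / 4)]
    rw [← one_div, le_div_iff₀ h32pos]
    linarith
  obtain ⟨N₂, hN₂⟩ := hevexp
  -- Step 5 : N and B
  refine ⟨C₃ / c₁, max (max N₂ 1) (h₀ + f₀ * N₀ + 1), fun n hn => ?_⟩
  have hn1 : 1 ≤ n := le_trans (le_trans (le_max_right _ _) (le_max_left _ _)) hn
  have hnN₂ : N₂ ≤ n := le_trans (le_trans (le_max_left _ _) (le_max_left _ _)) hn
  have hnlow : h₀ + f₀ * N₀ ≤ n := by
    have := le_trans (le_max_right _ _) hn; omega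
  set A : Set Ω := {ω | H ω + ∑ i ∈ Finset.range (F ω), X i ω = n} with hAdef
  have hAmeas : MeasurableSet A := Smeas X hXm F H hFm hHm n
  have hnpos : (0:ℝ) < (n:ℝ) := by exact_mod_cast hn1
  have hn32pos : (0:ℝ) < (n:ℝ) ^ ((3:ℝ)/2) := Real.rpow_pos_of_pos hnpos _
  -- lower bound on P A
  have hlowA : c₁ / (n:ℝ) ^ ((3:ℝ)/2) ≤ (P A).toReal := by
    have hl := lower X hXm hXindep hXid F H hFH c hc N₀ hN₀1 plow f₀ h₀ hf₀1 n hnlow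
    calc c₁ / (n:ℝ) ^ ((3:ℝ)/2)
        = qR * (pN₀ ^ (f₀ - 1) * (c / 2 / (n:ℝ) ^ ((3:ℝ)/2))) := by
          rw [hc₁def]; ring
      _ ≤ (P A).toReal := hl
  have hPApos : 0 < (P A).toReal := lt_of_lt_of_le (by positivity) hlowA
  have hPAne : P A ≠ 0 := by
    intro h0
    rw [h0] at hPApos
    simp at hPApos
  constructor
  · exact pos_iff_ne_zero.mpr hPAne
  -- upper bound on the integral
  have hup := upper X hXm hXindep hXid F H hFm hHm hFH C₀ hC₀pos.le
    (fun k m hk hm => obj X hXm hXindep hXid C₀ hC₀pos.le hC₀ k m hk hm)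
    t ht hint n hn1
  have hup2 : ∫ ω in A, (F ω : ℝ) ∂P ≤ C₃ / (n:ℝ) ^ ((3:ℝ)/2) := by
    refine le_trans hup ?_
    have hexp_le := hN₂ n hnN₂ hn1
    calc (2/t) * Real.exp (-(t * (n:ℝ)) / 4) * M
          + 4*C₀*(8/t)^4 * M / (n:ℝ)^((3:ℝ)/2)
        ≤ (2/t) * ((n:ℝ) ^ ((3:ℝ)/2))⁻¹ * M
          + 4*C₀*(8/t)^4 * M / (n:ℝ)^((3:ℝ)/2) := by
          apply add_le_add_left
          apply mul_le_mul_of_nonneg_right _ hMnonneg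
          exact mul_le_mul_of_nonneg_left hexp_le (by positivity)
      _ = C₃ / (n:ℝ) ^ ((3:ℝ)/2) := by
          rw [hC₃def]
          field_simp
  -- the conditional expectation
  have hcond : (∫ ω, (F ω : ℝ) ∂(ProbabilityTheory.cond P A))
      = (P A).toReal⁻¹ * ∫ ω in A, (F ω : ℝ) ∂P := by
    rw [ProbabilityTheory.cond, integral_smul_measure, ENNReal.toReal_inv, smul_eq_mul]
  rw [hcond]
  have hInn : 0 ≤ ∫ ω in A, (F ω : ℝ) ∂P :=
    setIntegral_nonneg hAmeas (fun ω _ => Nat.cast_nonneg _)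
  have hinv : (P A).toReal⁻¹ ≤ (c₁ / (n:ℝ) ^ ((3:ℝ)/2))⁻¹ := by
    apply inv_anti₀ (by positivity) hlowA
  calc (P A).toReal⁻¹ * ∫ ω in A, (F ω : ℝ) ∂P
      ≤ (c₁ / (n:ℝ) ^ ((3:ℝ)/2))⁻¹ * (C₃ / (n:ℝ) ^ ((3:ℝ)/2)) := by
        apply mul_le_mul hinv hup2 hInn (by positivity)
    _ = C₃ / c₁ := by
        field_simp
end
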